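/- arXiv:1506.03728 — 4 statements merged into one kernel-verified Lean document; each statement's English description precedes it below -/
import Mathlib

section
/- In a simple line arrangement L in ℝ², if F and F' are adjacent bounded faces, then it is not the case that both exactly three lines of L meet the closure of F and exactly three lines of L meet the closure of F' (no two bounded triangular faces are adjacent). -/
open Set

/-- A point of the Euclidean plane. -/
abbrev Pt : Type := ℝ × ℝ

/-- A line: a 1-dimensional affine subspace of ℝ², described parametrically. -/
def IsLine (l : Set Pt) : Prop :=
  ∃ p v : Pt, v ≠ 0 ∧ l = {q : Pt | ∃ t : ℝ, q = p + t • v}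

/-- A simple line arrangement: a finite set of lines, any two distinct lines meet in
exactly one point, and no point lies on three distinct lines. -/
def SimpleArrangement (L : Finset (Set Pt)) : Prop :=
  (∀ l ∈ L, IsLine l) ∧
  (∀ l ∈ L, ∀ l' ∈ L, l ≠ l' → ∃! p : Pt, p ∈ l ∧ p ∈ l') ∧
  (∀ p : Pt, {l : Set Pt | l ∈ L ∧ p ∈ l}.ncard ≤ 2)

/-- The faces of the arrangement: connected components of the complement of the union. -/
def IsFace (L : Finset (Set Pt)) (F : Set Pt) : Prop :=
  ∃ p : Pt, p ∉ (⋃ l ∈ L, l) ∧ F = connectedComponentIn (⋃ l ∈ L, l)ᶜ p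

/-- Two faces are adjacent (share an edge) if they are distinct and some point of
the intersection of their closures lies on exactly one line of `L`. -/
def Adjacent (L : Finset (Set Pt)) (F F' : Set Pt) : Prop :=
  F ≠ F' ∧ ∃ p ∈ closure F ∩ closure F', ∃! l : Set Pt, l ∈ L ∧ p ∈ l

/-- A dual path: a finite sequence of pairwise distinct faces with consecutive faces
adjacent. Its length is the length of the list. -/
def IsDualPath (L : Finset (Set Pt)) (P : List (Set Pt)) : Prop :=
  (∀ F ∈ P, IsFace L F) ∧ P.Nodup ∧ P.Chain' (Adjacent L)

/-- dot product on ℝ² -/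
def dotp (q w : Pt) : ℝ := q.1 * w.1 + q.2 * w.2

lemma lineForm {l : Set Pt} (h : IsLine l) :
    ∃ w : Pt, ∃ c : ℝ, w ≠ 0 ∧ ∀ q : Pt, (q ∈ l ↔ dotp q w = c) := by
  obtain ⟨p, v, hv, hl⟩ := h
  refine ⟨(-v.2, v.1), dotp p (-v.2, v.1), ?_, ?_⟩
  · simp only [Ne, Prod.ext_iff, Prod.fst, Prod.snd, not_and]
    intro h1 h2
    apply hv
    have : v.2 = 0 := by simpa using congrArg Neg.neg h1
    exact Prod.ext h2 this
  · intro q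
    constructor
    · intro hq
      rw [hl] at hq
      obtain ⟨t, rfl⟩ := hq
      simp [dotp, Prod.fst_add, Prod.snd_add]
      ring
    · intro hq
      rw [hl]
      refine ⟨dotp (q - p) v / dotp v v, ?_⟩
      have hvv : dotp v v > 0 := by
        rcases Prod.mk.injEq .. ▸ (by exact fun h => hv (Prod.ext h.1 h.2) : ¬(v.1 = 0 ∧ v.2 = 0)) with _
        have : v.1 ≠ 0 ∨ v.2 ≠ 0 := by
          by_contra hc; push_neg at hc; exact hv (Prod.ext hc.1 hc.2)
        rcases this with h1 | h1
        · have := mul_self_pos.2 h1; simp [dotp]; nlinarith [mul_self_nonneg v.2]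
        · have := mul_self_pos.2 h1; simp [dotp]; nlinarith [mul_self_nonneg v.1]
      have hkey : q.1 * (-v.2) + q.2 * v.1 = p.1 * (-v.2) + p.2 * v.1 := by
        simpa [dotp] using hq
      have h1 : (q - p).1 * v.2 = (q - p).2 * v.1 := by
        simp [Prod.fst_sub, Prod.snd_sub]; linarith
      apply Prod.ext
      · show q.1 = p.1 + (dotp (q - p) v / dotp v v) * v.1
        have e1 : (dotp (q - p) v / dotp v v) * v.1 = q.1 - p.1 := by
          rw [div_mul_eq_mul_div, div_eq_iff hvv.ne']
          simp only [dotp, Prod.fst_sub, Prod.snd_sub] at h1 ⊢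
          linear_combination (-v.2) * h1
        rw [e1]; ring
      · show q.2 = p.2 + (dotp (q - p) v / dotp v v) * v.2
        have e1 : (dotp (q - p) v / dotp v v) * v.2 = q.2 - p.2 := by
          rw [div_mul_eq_mul_div, div_eq_iff hvv.ne']
          simp only [dotp, Prod.fst_sub, Prod.snd_sub] at h1 ⊢
          linear_combination v.1 * h1
        rw [e1]; ring

open Classical in
noncomputable def nw (l : Set Pt) : Pt × ℝ :=
  if h : ∃ w : Pt, ∃ c : ℝ, w ≠ 0 ∧ ∀ q : Pt, (q ∈ l ↔ dotp q w = c) then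
    (h.choose, h.choose_spec.choose) else ((1, 0), 0)

/-- affine functional of a line -/
noncomputable def fv (l : Set Pt) (q : Pt) : ℝ := dotp q (nw l).1 - (nw l).2

lemma nw_spec {l : Set Pt} (h : IsLine l) :
    (nw l).1 ≠ 0 ∧ ∀ q : Pt, (q ∈ l ↔ fv l q = 0) := by
  have h' := lineForm h
  rw [nw]
  rw [dif_pos h']
  refine ⟨h'.choose_spec.choose_spec.1, fun q => ?_⟩
  rw [fv, nw]
  rw [dif_pos h', sub_eq_zero]
  exact h'.choose_spec.choose_spec.2 q

lemma fv_affine (l : Set Pt) (x y : Pt) (t : ℝ) :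
    fv l ((1 - t) • x + t • y) = (1 - t) * fv l x + t * fv l y := by
  simp only [fv, dotp, Prod.fst_add, Prod.snd_add, Prod.smul_fst, Prod.smul_snd,
    smul_eq_mul]
  ring

lemma fv_line (l : Set Pt) (x d : Pt) (t : ℝ) :
    fv l (x + t • d) = fv l x + t * dotp d (nw l).1 := by
  simp only [fv, dotp, Prod.fst_add, Prod.snd_add, Prod.smul_fst, Prod.smul_snd,
    smul_eq_mul]
  ring

lemma fv_continuous (l : Set Pt) : Continuous (fv l) := by
  have : fv l = fun q : Pt => q.1 * (nw l).1.1 + q.2 * (nw l).1.2 - (nw l).2 := rfl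
  rw [this]; fun_prop

/-- the open cell of sign conditions -/
def cell (L : Finset (Set Pt)) (p : Pt) : Set Pt :=
  {q : Pt | ∀ l ∈ L, 0 < fv l q * fv l p}

lemma cell_open (L : Finset (Set Pt)) (p : Pt) : IsOpen (cell L p) := by
  have : cell L p = ⋂ l ∈ L, {q : Pt | 0 < fv l q * fv l p} := by
    ext q; simp [cell]
  rw [this]
  refine isOpen_biInter_finset fun l _ => ?_
  have : {q : Pt | 0 < fv l q * fv l p} = (fun q => fv l q * fv l p) ⁻¹' Ioi 0 := rfl
  rw [this]
  exact ((fv_continuous l).mul continuous_const).isOpen_preimage _ isOpen_Ioi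

lemma cell_convex (L : Finset (Set Pt)) (p : Pt) : Convex ℝ (cell L p) := by
  intro x hx y hy a b ha hb hab
  intro l hl
  have hx' := hx l hl
  have hy' := hy l hl
  have : fv l (a • x + b • y) = a * fv l x + b * fv l y := by
    have := fv_affine l x y b
    rwa [show (1 : ℝ) - b = a by linarith] at this
  rw [this]
  rcases lt_or_eq_of_le ha with ha' | ha'
  · nlinarith
  · have hb' : b = 1 := by linarith
    rw [← ha', hb']; simpa using hy'

lemma fv_ne_zero {L : Finset (Set Pt)} (hL : ∀ l ∈ L, IsLine l) {p : Pt}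
    (hp : p ∉ ⋃ l ∈ L, l) {l : Set Pt} (hl : l ∈ L) : fv l p ≠ 0 := by
  intro h0
  exact hp (mem_biUnion hl (((nw_spec (hL l hl)).2 p).2 h0))

lemma mem_cell_self {L : Finset (Set Pt)} (hL : ∀ l ∈ L, IsLine l) {p : Pt}
    (hp : p ∉ ⋃ l ∈ L, l) : p ∈ cell L p := fun l hl =>
  mul_self_pos.2 (fv_ne_zero hL hp hl)

lemma cell_subset_compl {L : Finset (Set Pt)} (hL : ∀ l ∈ L, IsLine l) (p : Pt) :
    cell L p ⊆ (⋃ l ∈ L, l)ᶜ := by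
  intro q hq hqU
  obtain ⟨l, hl, hql⟩ := mem_iUnion₂.1 hqU
  have := hq l hl
  rw [((nw_spec (hL l hl)).2 q).1 hql] at this
  simp at this

/-- the closed cell -/
def ccell (L : Finset (Set Pt)) (p : Pt) : Set Pt :=
  {q : Pt | ∀ l ∈ L, 0 ≤ fv l q * fv l p}

lemma ccell_closed (L : Finset (Set Pt)) (p : Pt) : IsClosed (ccell L p) := by
  have : ccell L p = ⋂ l ∈ L, (fun q => fv l q * fv l p) ⁻¹' Ici 0 := by
    ext q; simp [ccell]
  rw [this]
  exact isClosed_biInter fun l _ =>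
    IsClosed.preimage ((fv_continuous l).mul continuous_const) isClosed_Ici

lemma closure_cell {L : Finset (Set Pt)} (hL : ∀ l ∈ L, IsLine l) {p : Pt}
    (hp : p ∉ ⋃ l ∈ L, l) : closure (cell L p) = ccell L p := by
  apply Subset.antisymm
  · refine closure_minimal (fun q hq l hl => le_of_lt (hq l hl)) (ccell_closed L p)
  · intro x hx
    have key : ∀ t : ℝ, 0 < t → t ≤ 1 → (1 - t) • x + t • p ∈ cell L p := by
      intro t ht ht1 l hl
      rw [fv_affine]
      have h1 : 0 ≤ fv l x * fv l p := hx l hl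
      have h2 : 0 < fv l p * fv l p := mul_self_pos.2 (fv_ne_zero hL hp hl)
      nlinarith
    have htend : Filter.Tendsto (fun t : ℝ => (1 - t) • x + t • p)
        (nhdsWithin 0 (Ioi 0)) (nhds x) := by
      have hc : Continuous (fun t : ℝ => (1 - t) • x + t • p) := by fun_prop
      have h2 : Filter.Tendsto (fun t : ℝ => (1 - t) • x + t • p)
          (nhdsWithin 0 (Ioi 0)) (nhds (((1:ℝ) - 0) • x + (0:ℝ) • p)) :=
        (hc.tendsto 0).mono_left nhdsWithin_le_nhds
      simpa using h2
    refine mem_closure_of_tendsto htend ?_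
    filter_upwards [Ioo_mem_nhdsGT_of_mem (by norm_num : (0:ℝ) ∈ Ico 0 1)] with t ht
    exact key t ht.1 (le_of_lt ht.2)

lemma face_eq_cell {L : Finset (Set Pt)} (hL : ∀ l ∈ L, IsLine l) {p : Pt}
    (hp : p ∉ ⋃ l ∈ L, l) :
    connectedComponentIn (⋃ l ∈ L, l)ᶜ p = cell L p := by
  apply Subset.antisymm
  · -- component ⊆ cell
    have hCpre : IsPreconnected (connectedComponentIn (⋃ l ∈ L, l)ᶜ p) :=
      isPreconnected_connectedComponentIn
    have hCsub : connectedComponentIn (⋃ l ∈ L, l)ᶜ p ⊆ (⋃ l ∈ L, l)ᶜ :=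
      connectedComponentIn_subset _ _
    have hpC : p ∈ connectedComponentIn (⋃ l ∈ L, l)ᶜ p :=
      mem_connectedComponentIn hp
    -- key: Uᶜ ∩ closure (cell) ⊆ cell
    have hkey : (⋃ l ∈ L, l)ᶜ ∩ closure (cell L p) ⊆ cell L p := by
      rintro q ⟨hqU, hqc⟩ l hl
      rw [closure_cell hL hp] at hqc
      have h1 : 0 ≤ fv l q * fv l p := hqc l hl
      have h2 : fv l q ≠ 0 := fv_ne_zero hL hqU hl
      have h3 : fv l p ≠ 0 := fv_ne_zero hL hp hl
      exact lt_of_le_of_ne h1 (Ne.symm (mul_ne_zero h2 h3))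
    by_contra hnot
    obtain ⟨q, hqC, hqS⟩ := not_subset.1 hnot
    have hsplit := hCpre (cell L p) (closure (cell L p))ᶜ (cell_open L p)
      (isClosed_closure.isOpen_compl) ?_ ⟨p, hpC, mem_cell_self hL hp⟩
      ⟨q, hqC, fun hq => hqS (hkey ⟨hCsub hqC, hq⟩)⟩
    · obtain ⟨z, _, hz1, hz2⟩ := hsplit
      exact hz2 (subset_closure hz1)
    · intro z hz
      by_cases hzc : z ∈ closure (cell L p)
      · exact Or.inl (hkey ⟨hCsub hz, hzc⟩)
      · exact Or.inr hzc
  · exact (cell_convex L p).isPreconnected.subset_connectedComponentIn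
      (mem_cell_self hL hp) (cell_subset_compl hL p)

open Classical in
lemma ccell_touch {L : Finset (Set Pt)} (hL : ∀ l ∈ L, IsLine l) {p : Pt}
    (hp : p ∉ ⋃ l ∈ L, l) :
    ccell L p =
      {q : Pt | ∀ m ∈ L, (∃ y ∈ ccell L p, y ∈ m) → 0 ≤ fv m q * fv m p} := by
  apply Subset.antisymm
  · intro q hq m hm _
    exact hq m hm
  · intro x hx
    intro m hm
    by_contra hneg
    push_neg at hneg
    -- set of lines with negative constraint at x
    set Lneg := L.filter (fun m => fv m x * fv m p < 0) with hLneg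
    have hmem : m ∈ Lneg := Finset.mem_filter.2 ⟨hm, hneg⟩
    have hne : Lneg.Nonempty := ⟨m, hmem⟩
    -- root function
    set r : Set Pt → ℝ :=
      fun m => (fv m p * fv m p) / (fv m p * fv m p - fv m x * fv m p) with hr
    obtain ⟨m0, hm0, hm0min⟩ := Finset.exists_min_image Lneg r hne
    have hm0L : m0 ∈ L := (Finset.mem_filter.1 hm0).1
    have hm0neg : fv m0 x * fv m0 p < 0 := (Finset.mem_filter.1 hm0).2
    have hα0 : 0 < fv m0 p * fv m0 p := mul_self_pos.2 (fv_ne_zero hL hp hm0L)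
    have hden0 : 0 < fv m0 p * fv m0 p - fv m0 x * fv m0 p := by linarith
    set t1 := r m0 with ht1
    have ht1pos : 0 < t1 := by
      rw [ht1, hr]; positivity
    have ht1lt : t1 < 1 := by
      rw [ht1, hr]
      rw [div_lt_one hden0]; linarith
    -- the point on the segment
    set y := (1 - t1) • p + t1 • x with hy
    have hyc : y ∈ ccell L p := by
      intro n hn
      rw [hy, fv_affine]
      have hαn : 0 < fv n p * fv n p := mul_self_pos.2 (fv_ne_zero hL hp hn)
      by_cases hb : 0 ≤ fv n x * fv n p
      · nlinarith
      · have hnneg : n ∈ Lneg := Finset.mem_filter.2 ⟨hn, not_le.1 hb⟩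
        have hle : t1 ≤ r n := hm0min n hnneg
        have hdenn : 0 < fv n p * fv n p - fv n x * fv n p := by
          have := not_le.1 hb; linarith
        have : r n * (fv n p * fv n p - fv n x * fv n p) = fv n p * fv n p := by
          rw [hr]; exact div_mul_cancel₀ _ hdenn.ne'
        nlinarith
    have hy0 : fv m0 y = 0 := by
      have : fv m0 y * fv m0 p = 0 := by
        rw [hy, fv_affine]
        have : t1 * (fv m0 p * fv m0 p - fv m0 x * fv m0 p) = fv m0 p * fv m0 p := by
          rw [ht1, hr]; exact div_mul_cancel₀ _ hden0.ne'
        nlinarith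
      rcases mul_eq_zero.1 this with h | h
      · exact h
      · exact absurd h (fv_ne_zero hL hp hm0L)
    have hym0 : y ∈ m0 := ((nw_spec (hL m0 hm0L)).2 y).2 hy0
    exact absurd (hx m0 hm0L ⟨y, hyc, hym0⟩) (not_le.2 hm0neg)

lemma no_ray {s : Set Pt} (hs : Bornology.IsBounded s) {x0 d : Pt} (hd : d ≠ 0)
    (h : ∀ t : ℝ, 0 ≤ t → x0 + t • d ∈ s) : False := by
  obtain ⟨C, hC⟩ := hs.exists_norm_le
  have hdpos : 0 < ‖d‖ := norm_pos_iff.2 hd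
  set t := (C + ‖x0‖ + 1) / ‖d‖ with ht
  have htpos : 0 ≤ t := by
    have h1 : 0 ≤ C := le_trans (norm_nonneg _) (hC _ (h 0 le_rfl))
    positivity
  have h2 := hC _ (h t htpos)
  have h3 : ‖t • d‖ ≤ ‖x0 + t • d‖ + ‖x0‖ := by
    have e : x0 + t • d - x0 = t • d := by abel
    calc ‖t • d‖ = ‖x0 + t • d - x0‖ := by rw [e]
      _ ≤ ‖x0 + t • d‖ + ‖x0‖ := norm_sub_le _ _
  rw [norm_smul, Real.norm_eq_abs, abs_of_nonneg htpos] at h3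
  rw [ht] at h3
  rw [div_mul_cancel₀ _ hdpos.ne'] at h3
  linarith

/-- cross product of two normals -/
def crossp (v w : Pt) : ℝ := v.1 * w.2 - v.2 * w.1

lemma not_parallel {L : Finset (Set Pt)}
    (hIL : ∀ l ∈ L, IsLine l)
    (hint : ∀ l ∈ L, ∀ l' ∈ L, l ≠ l' → ∃! p : Pt, p ∈ l ∧ p ∈ l')
    {a b : Set Pt} (ha : a ∈ L) (hb : b ∈ L) (hab : a ≠ b) :
    crossp (nw a).1 (nw b).1 ≠ 0 := by
  intro hcr
  obtain ⟨wa0, hwa⟩ := nw_spec (hIL a ha)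
  obtain ⟨wb0, hwb⟩ := nw_spec (hIL b hb)
  obtain ⟨q0, ⟨hq0a, hq0b⟩, -⟩ := hint a ha b hb hab
  -- show any point membership equivalence
  apply hab
  ext q
  rw [hwa q, hwb q]
  have e0a : fv a q0 = 0 := (hwa q0).1 hq0a
  have e0b : fv b q0 = 0 := (hwb q0).1 hq0b
  set wa := (nw a).1
  set wb := (nw b).1
  have hcr' : wa.1 * wb.2 = wa.2 * wb.1 := by
    simpa [crossp, sub_eq_zero] using hcr
  have key : ∀ u : Pt, dotp u wa = 0 ↔ dotp u wb = 0 := by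
    intro u
    have hwa1 : wa.1 ≠ 0 ∨ wa.2 ≠ 0 := by
      by_contra hc; push_neg at hc; exact wa0 (Prod.ext hc.1 hc.2)
    have hwb1 : wb.1 ≠ 0 ∨ wb.2 ≠ 0 := by
      by_contra hc; push_neg at hc; exact wb0 (Prod.ext hc.1 hc.2)
    constructor
    · intro hu
      simp only [dotp] at hu ⊢
      rcases hwa1 with h1 | h1
      · have : wa.1 * (u.1 * wb.1 + u.2 * wb.2) = 0 := by
          have : wa.1 * (u.1 * wb.1 + u.2 * wb.2) = wb.1 * (u.1 * wa.1 + u.2 * wa.2) := by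
            linear_combination u.2 * hcr'
          rw [this, hu]; ring
        exact (mul_eq_zero.1 this).resolve_left h1
      · have : wa.2 * (u.1 * wb.1 + u.2 * wb.2) = 0 := by
          have : wa.2 * (u.1 * wb.1 + u.2 * wb.2) = wb.2 * (u.1 * wa.1 + u.2 * wa.2) := by
            linear_combination (-u.1) * hcr'
          rw [this, hu]; ring
        exact (mul_eq_zero.1 this).resolve_left h1
    · intro hu
      simp only [dotp] at hu ⊢
      rcases hwb1 with h1 | h1
      · have : wb.1 * (u.1 * wa.1 + u.2 * wa.2) = 0 := by
          have : wb.1 * (u.1 * wa.1 + u.2 * wa.2) = wa.1 * (u.1 * wb.1 + u.2 * wb.2) := by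
            linear_combination (-u.2) * hcr'
          rw [this, hu]; ring
        exact (mul_eq_zero.1 this).resolve_left h1
      · have : wb.2 * (u.1 * wa.1 + u.2 * wa.2) = 0 := by
          have : wb.2 * (u.1 * wa.1 + u.2 * wa.2) = wa.2 * (u.1 * wb.1 + u.2 * wb.2) := by
            linear_combination u.1 * hcr'
          rw [this, hu]; ring
        exact (mul_eq_zero.1 this).resolve_left h1
  have hqa : fv a q = 0 ↔ dotp (q - q0) wa = 0 := by
    simp only [fv, dotp, Prod.fst_sub, Prod.snd_sub] at e0a ⊢
    constructor <;> intro h <;> linarith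
  have hqb : fv b q = 0 ↔ dotp (q - q0) wb = 0 := by
    simp only [fv, dotp, Prod.fst_sub, Prod.snd_sub] at e0b ⊢
    constructor <;> intro h <;> linarith
  rw [hqa, hqb, key]

lemma solve2 {w1 w2 : Pt} (h : crossp w1 w2 ≠ 0) (r1 r2 : ℝ) :
    ∃ d : Pt, dotp d w1 = r1 ∧ dotp d w2 = r2 := by
  refine ⟨((r1 * w2.2 - r2 * w1.2) / crossp w1 w2,
           (r2 * w1.1 - r1 * w2.1) / crossp w1 w2), ?_, ?_⟩ <;>
  · simp only [dotp, crossp] at h ⊢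
    rw [div_mul_eq_mul_div, div_mul_eq_mul_div, ← add_div, div_eq_iff h]
    ring

lemma nondeg {L : Finset (Set Pt)}
    (hIL : ∀ l ∈ L, IsLine l)
    (hint : ∀ l ∈ L, ∀ l' ∈ L, l ≠ l' → ∃! p : Pt, p ∈ l ∧ p ∈ l')
    {l b : Set Pt} (hl : l ∈ L) (hb : b ∈ L) (hlb : l ≠ b)
    {P V : Pt} (hV : V ≠ 0) (hlp : l = {q : Pt | ∃ t : ℝ, q = P + t • V}) :
    dotp V (nw b).1 ≠ 0 := by
  intro h0
  obtain ⟨q0, ⟨hq0l, hq0b⟩, huniq⟩ := hint l hl b hb hlb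
  obtain ⟨t0, rfl⟩ : ∃ t0 : ℝ, q0 = P + t0 • V := by rwa [hlp] at hq0l
  have hfb : ∀ t : ℝ, fv b (P + t • V) = 0 := by
    intro t
    have h1 := fv_line b P V t
    have h2 := fv_line b P V t0
    rw [h0, mul_zero, add_zero] at h1 h2
    rw [h1, ← h2]
    exact ((nw_spec (hIL b hb)).2 _).1 hq0b
  have hP : P ∈ l ∧ P ∈ b := by
    constructor
    · rw [hlp]; exact ⟨0, by simp⟩
    · exact ((nw_spec (hIL b hb)).2 P).2 (by simpa using hfb 0)
  have hPV : P + V ∈ l ∧ P + V ∈ b := by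
    constructor
    · rw [hlp]; exact ⟨1, by simp⟩
    · exact ((nw_spec (hIL b hb)).2 _).2 (by simpa using hfb 1)
  have := (huniq P hP).trans (huniq (P + V) hPV).symm
  apply hV
  have : P + V = P + 0 := by rw [← this]; simp
  exact add_left_cancel this

lemma three_lines {L : Finset (Set Pt)}
    (hcard : ∀ p : Pt, {l : Set Pt | l ∈ L ∧ p ∈ l}.ncard ≤ 2)
    {a b c : Set Pt} (ha : a ∈ L) (hb : b ∈ L) (hc : c ∈ L)
    (hab : a ≠ b) (hac : a ≠ c) {x : Pt} (hxa : x ∈ a) (hxb : x ∈ b) (hxc : x ∈ c) :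
    b = c := by
  by_contra hbc
  have hsub : ({a, b, c} : Set (Set Pt)) ⊆ {l : Set Pt | l ∈ L ∧ x ∈ l} := by
    intro m hm
    rcases hm with rfl | rfl | rfl
    · exact ⟨ha, hxa⟩
    · exact ⟨hb, hxb⟩
    · exact ⟨hc, hxc⟩
  have hfin : {l : Set Pt | l ∈ L ∧ x ∈ l}.Finite :=
    L.finite_toSet.subset (fun m hm => hm.1)
  have h3 : ({a, b, c} : Set (Set Pt)).ncard = 3 :=
    Set.ncard_eq_three.2 ⟨a, b, c, hab, hac, hbc, rfl⟩
  have := Set.ncard_le_ncard hsub hfin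
  rw [h3] at this
  have := hcard x
  omega

lemma extract3 {T : Set (Set Pt)} (h3 : T.ncard = 3) {l : Set Pt} (hl : l ∈ T) :
    ∃ b c : Set Pt, b ≠ c ∧ l ≠ b ∧ l ≠ c ∧ T = {l, b, c} := by
  obtain ⟨x, y, z, hxy, hxz, hyz, rfl⟩ := Set.ncard_eq_three.1 h3
  rcases hl with rfl | rfl | rfl
  · exact ⟨y, z, hyz, hxy, hxz, rfl⟩
  · refine ⟨x, z, hxz, hxy.symm, hyz, ?_⟩
    ext m; simp only [mem_insert_iff, mem_singleton_iff]; tauto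
  · refine ⟨x, y, hxy, hxz.symm, hyz.symm, ?_⟩
    ext m; simp only [mem_insert_iff, mem_singleton_iff]; tauto

lemma line_trans {l : Set Pt} {P V : Pt}
    (hlp : l = {q : Pt | ∃ t : ℝ, q = P + t • V}) {p0 : Pt} (hp0 : p0 ∈ l) (t : ℝ) :
    p0 + t • V ∈ l := by
  rw [hlp] at hp0 ⊢
  obtain ⟨s, rfl⟩ := hp0
  exact ⟨s + t, by rw [add_smul, add_assoc]⟩

lemma face_data {L : Finset (Set Pt)}
    (hIL : ∀ l ∈ L, IsLine l)
    (hint : ∀ l ∈ L, ∀ l' ∈ L, l ≠ l' → ∃! p : Pt, p ∈ l ∧ p ∈ l')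
    {p : Pt} (hp : p ∉ ⋃ l ∈ L, l) (hbdd : Bornology.IsBounded (ccell L p))
    {l : Set Pt} (hlL : l ∈ L) {P V : Pt} (hV : V ≠ 0)
    (hlp : l = {q : Pt | ∃ t : ℝ, q = P + t • V})
    {p0 : Pt} (hp0cc : p0 ∈ ccell L p) (hp0l : p0 ∈ l)
    (hp0not : ∀ m ∈ L, m ≠ l → p0 ∉ m)
    (h3 : {m : Set Pt | m ∈ L ∧ ∃ q ∈ ccell L p, q ∈ m}.ncard = 3) :
    ∃ b c : Set Pt, b ∈ L ∧ c ∈ L ∧ l ≠ b ∧ l ≠ c ∧ b ≠ c ∧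
      {m : Set Pt | m ∈ L ∧ ∃ q ∈ ccell L p, q ∈ m} = {l, b, c} ∧
      0 < fv b p0 * fv b p ∧ 0 < fv c p0 * fv c p ∧
      0 < dotp V (nw b).1 * fv b p ∧ dotp V (nw c).1 * fv c p < 0 := by
  have hlT : l ∈ {m : Set Pt | m ∈ L ∧ ∃ q ∈ ccell L p, q ∈ m} :=
    ⟨hlL, p0, hp0cc, hp0l⟩
  obtain ⟨b, c, hbc, hlb, hlc, hT⟩ := extract3 h3 hlT
  have hbL : b ∈ L := by
    have : b ∈ ({l, b, c} : Set (Set Pt)) := by simp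
    rw [← hT] at this; exact this.1
  have hcL : c ∈ L := by
    have : c ∈ ({l, b, c} : Set (Set Pt)) := by simp
    rw [← hT] at this; exact this.1
  -- positivity of p0 constraints
  have hApos : ∀ m ∈ L, m ≠ l → 0 < fv m p0 * fv m p := by
    intro m hm hml
    refine lt_of_le_of_ne (hp0cc m hm) (Ne.symm (mul_ne_zero ?_ (fv_ne_zero hIL hp hm)))
    intro h0
    exact hp0not m hm hml (((nw_spec (hIL m hm)).2 p0).2 h0)
  have hAb := hApos b hbL (Ne.symm hlb)
  have hAc := hApos c hcL (Ne.symm hlc)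
  -- slopes nonzero
  have hSb : dotp V (nw b).1 * fv b p ≠ 0 :=
    mul_ne_zero (nondeg hIL hint hlL hbL hlb hV hlp) (fv_ne_zero hIL hp hbL)
  have hSc : dotp V (nw c).1 * fv c p ≠ 0 :=
    mul_ne_zero (nondeg hIL hint hlL hcL hlc hV hlp) (fv_ne_zero hIL hp hcL)
  -- not both same sign
  have hray : ∀ V' : Pt, V' ≠ 0 → (∀ t : ℝ, 0 ≤ t → p0 + t • V' ∈ l) →
      ¬(0 ≤ dotp V' (nw b).1 * fv b p ∧ 0 ≤ dotp V' (nw c).1 * fv c p) := by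
    rintro V' hV' hmem ⟨h1, h2⟩
    refine no_ray hbdd hV' (x0 := p0) fun t ht => ?_
    rw [ccell_touch hIL hp]
    intro m hm hw
    have hmT : m ∈ ({l, b, c} : Set (Set Pt)) := by rw [← hT]; exact ⟨hm, hw⟩
    rcases hmT with rfl | rfl | rfl
    · have : fv m (p0 + t • V') = 0 := ((nw_spec (hIL m hm)).2 _).1 (hmem t ht)
      rw [this, zero_mul]
    · rw [fv_line]
      nlinarith
    · rw [fv_line]
      nlinarith
  have hmemV : ∀ t : ℝ, 0 ≤ t → p0 + t • V ∈ l := fun t _ => line_trans hlp hp0l t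
  have hmemV' : ∀ t : ℝ, 0 ≤ t → p0 + t • (-V) ∈ l := by
    intro t _
    have := line_trans hlp hp0l (-t)
    rwa [neg_smul, ← smul_neg] at this
  have h1 := hray V hV hmemV
  have h2 := hray (-V) (neg_ne_zero.2 hV) hmemV'
  have hnegb : dotp (-V) (nw b).1 = -(dotp V (nw b).1) := by simp [dotp]; ring
  have hnegc : dotp (-V) (nw c).1 = -(dotp V (nw c).1) := by simp [dotp]; ring
  rw [hnegb, hnegc] at h2
  rcases lt_or_gt_of_ne hSb with hb1 | hb1
  · rcases lt_or_gt_of_ne hSc with hc1 | hc1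
    · exact absurd ⟨by nlinarith, by nlinarith⟩ h2
    · refine ⟨c, b, hcL, hbL, hlc, hlb, hbc.symm, ?_, hAc, hAb, hc1, hb1⟩
      rw [hT]; ext m; simp only [mem_insert_iff, mem_singleton_iff]; tauto
  · rcases lt_or_gt_of_ne hSc with hc1 | hc1
    · exact ⟨b, c, hbL, hcL, hlb, hlc, hbc, hT, hAb, hAc, hb1, hc1⟩
    · exact absurd ⟨le_of_lt hb1, le_of_lt hc1⟩ h1

lemma upper_le {L : Finset (Set Pt)}
    (hIL : ∀ l ∈ L, IsLine l)
    {p p' : Pt} (hp : p ∉ ⋃ l ∈ L, l)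
    {l b c c' : Set Pt} (hlL : l ∈ L) (hc'L : c' ∈ L)
    (hT : {m : Set Pt | m ∈ L ∧ ∃ q ∈ ccell L p, q ∈ m} = {l, b, c})
    (hlb : l ≠ b) (hlc : l ≠ c) (hlc' : l ≠ c')
    {P V : Pt} (hlp : l = {q : Pt | ∃ t : ℝ, q = P + t • V})
    {p0 : Pt} (hp0l : p0 ∈ l)
    (hAb : 0 < fv b p0 * fv b p) (hAc : 0 < fv c p0 * fv c p)
    (hAc' : 0 < fv c' p0 * fv c' p')
    (hsb : 0 < dotp V (nw b).1 * fv b p) (hsc : dotp V (nw c).1 * fv c p < 0)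
    (hsc' : dotp V (nw c').1 * fv c' p' < 0) :
    (fv c p0 * fv c p) / (-(dotp V (nw c).1 * fv c p)) ≤
      (fv c' p0 * fv c' p') / (-(dotp V (nw c').1 * fv c' p')) := by
  by_contra hlt
  push_neg at hlt
  set uc := (fv c p0 * fv c p) / (-(dotp V (nw c).1 * fv c p)) with huc
  set uc' := (fv c' p0 * fv c' p') / (-(dotp V (nw c').1 * fv c' p')) with huc'
  have huc'pos : 0 < uc' := by
    rw [huc']; exact div_pos hAc' (by linarith)
  have hucpos : 0 < uc := by
    rw [huc]; exact div_pos hAc (by linarith)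
  set y := p0 + uc' • V with hy
  have hyl : y ∈ l := line_trans hlp hp0l uc'
  have hyc' : fv c' y = 0 := by
    have h1 : fv c' y * fv c' p' = 0 := by
      rw [hy, fv_line]
      have : uc' * (dotp V (nw c').1 * fv c' p') = -(fv c' p0 * fv c' p') := by
        rw [huc']
        field_simp
        rw [mul_div_assoc, div_self (left_ne_zero_of_mul (ne_of_lt hsc')), mul_one]
      nlinarith [this]
    rcases mul_eq_zero.1 h1 with h | h
    · exact h
    · exfalso; rw [h, mul_zero] at hAc'; exact lt_irrefl 0 hAc'
  have hyc'mem : y ∈ c' := ((nw_spec (hIL c' hc'L)).2 y).2 hyc'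
  have hybpos : 0 < fv b y * fv b p := by
    rw [hy, fv_line]
    nlinarith
  have hycpos : 0 < fv c y * fv c p := by
    rw [hy, fv_line]
    have : uc * (-(dotp V (nw c).1 * fv c p)) = fv c p0 * fv c p := by
      rw [huc]; field_simp
      rw [mul_div_assoc, div_self (left_ne_zero_of_mul (ne_of_lt hsc)), mul_one]
    nlinarith [this, mul_lt_mul_of_neg_right hlt (show dotp V (nw c).1 * fv c p < 0 from hsc)]
  have hycc : y ∈ ccell L p := by
    rw [ccell_touch hIL hp]
    intro m hm hw
    have hmT : m ∈ ({l, b, c} : Set (Set Pt)) := by rw [← hT]; exact ⟨hm, hw⟩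
    rcases hmT with rfl | rfl | rfl
    · rw [((nw_spec (hIL m hm)).2 _).1 hyl, zero_mul]
    · exact le_of_lt hybpos
    · exact le_of_lt hycpos
  have hc'T : c' ∈ ({l, b, c} : Set (Set Pt)) := by
    rw [← hT]; exact ⟨hc'L, y, hycc, hyc'mem⟩
  rcases hc'T with rfl | rfl | rfl
  · exact hlc' rfl
  · rw [hyc'] at hybpos; simp at hybpos
  · rw [hyc'] at hycpos; simp at hycpos

lemma dotp_neg_left (V w : Pt) : dotp (-V) w = -dotp V w := by
  simp only [dotp, Prod.fst_neg, Prod.snd_neg]; ring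

lemma neg_param {l : Set Pt} {P V : Pt}
    (hlp : l = {q : Pt | ∃ t : ℝ, q = P + t • V}) :
    l = {q : Pt | ∃ t : ℝ, q = P + t • (-V)} := by
  rw [hlp]; ext q
  constructor
  · rintro ⟨t, rfl⟩; exact ⟨-t, by simp⟩
  · rintro ⟨t, rfl⟩; exact ⟨-t, by simp⟩

lemma root_pt {c : Set Pt} {p p0 V : Pt}
    (hAc : 0 < fv c p0 * fv c p) (hsc : dotp V (nw c).1 * fv c p < 0) :
    fv c (p0 + ((fv c p0 * fv c p) / (-(dotp V (nw c).1 * fv c p))) • V) = 0 := by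
  have hX : fv c p ≠ 0 := by
    intro h; rw [h, mul_zero] at hAc; exact lt_irrefl 0 hAc
  rw [fv_line]
  have key : (fv c p0 * fv c p) / (-(dotp V (nw c).1 * fv c p)) *
      (dotp V (nw c).1 * fv c p) = -(fv c p0 * fv c p) := by
    rw [div_mul_eq_mul_div, div_neg, mul_div_assoc, div_self (ne_of_lt hsc), mul_one]
  have h2 : (fv c p0 + (fv c p0 * fv c p) / (-(dotp V (nw c).1 * fv c p)) *
      dotp V (nw c).1) * fv c p = 0 := by nlinarith [key]
  rcases mul_eq_zero.1 h2 with h | h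
  · exact h
  · exact absurd h hX

lemma sign_transfer {a x y : ℝ} (h1 : 0 < a * x) (h2 : 0 < x * y) : 0 < a * y := by
  have hx : x ≠ 0 := fun h => by rw [h, zero_mul] at h2; exact lt_irrefl 0 h2
  nlinarith [mul_pos h1 h2, mul_self_pos.2 hx]

lemma sign_transfer' {a x y : ℝ} (h1 : 0 ≤ a * x) (h2 : 0 < x * y) : 0 ≤ a * y := by
  have hx : x ≠ 0 := fun h => by rw [h, zero_mul] at h2; exact lt_irrefl 0 h2
  nlinarith [mul_nonneg h1 h2.le, mul_self_pos.2 hx]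

lemma sign_transfer_neg {a x y : ℝ} (h1 : a * x < 0) (h2 : x * y < 0) : 0 < a * y := by
  have hx : x ≠ 0 := fun h => by rw [h, zero_mul] at h2; exact lt_irrefl 0 h2
  nlinarith [mul_pos_of_neg_of_neg h1 h2, mul_self_pos.2 hx]

/-- No two bounded triangular faces (faces whose closures meet exactly three lines)
are adjacent in a simple line arrangement. -/
theorem statement6 (L : Finset (Set Pt)) (hL : SimpleArrangement L)
    (F F' : Set Pt) (hF : IsFace L F) (hF' : IsFace L F')
    (hb : Bornology.IsBounded F) (hb' : Bornology.IsBounded F')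
    (hadj : Adjacent L F F') :
    ¬({l : Set Pt | l ∈ L ∧ ∃ p ∈ closure F, p ∈ l}.ncard = 3 ∧
      {l : Set Pt | l ∈ L ∧ ∃ p ∈ closure F', p ∈ l}.ncard = 3) := by
  obtain ⟨hIL, hint, hcard⟩ := hL
  obtain ⟨pb, hpb, hFeq⟩ := hF
  obtain ⟨pb', hpb', hF'eq⟩ := hF'
  have hFc : F = cell L pb := by rw [hFeq, face_eq_cell hIL hpb]
  have hF'c : F' = cell L pb' := by rw [hF'eq, face_eq_cell hIL hpb']
  have hclF : closure F = ccell L pb := by rw [hFc, closure_cell hIL hpb]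
  have hclF' : closure F' = ccell L pb' := by rw [hF'c, closure_cell hIL hpb']
  rintro ⟨h3, h3'⟩
  rw [hclF] at h3
  rw [hclF'] at h3'
  obtain ⟨hne, p0, hp0mem, l, ⟨hlL, hp0l⟩, hluniq⟩ := hadj
  have hp0cc : p0 ∈ ccell L pb := hclF ▸ hp0mem.1
  have hp0cc' : p0 ∈ ccell L pb' := hclF' ▸ hp0mem.2
  have hp0not : ∀ m ∈ L, m ≠ l → p0 ∉ m := by
    intro m hm hml hmem
    exact hml (hluniq m ⟨hm, hmem⟩)
  obtain ⟨P, V, hV, hlp⟩ := hIL l hlL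
  have hbdd : Bornology.IsBounded (ccell L pb) := hclF ▸ hb.closure
  have hbdd' : Bornology.IsBounded (ccell L pb') := hclF' ▸ hb'.closure
  obtain ⟨b, c, hbL, hcL, hlb, hlc, hbc, hT, hAb, hAc, hsb, hsc⟩ :=
    face_data hIL hint hpb hbdd hlL hV hlp hp0cc hp0l hp0not h3
  obtain ⟨b', c', hb'L, hc'L, hlb', hlc', hbc', hT', hAb', hAc', hsb', hsc'⟩ :=
    face_data hIL hint hpb' hbdd' hlL hV hlp hp0cc' hp0l hp0not h3'
  -- upper endpoints agree : c = c'
  have hcc' : c = c' := by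
    have h1 := upper_le hIL hpb hlL hc'L hT hlb hlc hlc' hlp hp0l hAb hAc hAc' hsb hsc hsc'
    have h2 := upper_le hIL hpb' hlL hcL hT' hlb' hlc' hlc hlp hp0l hAb' hAc' hAc hsb' hsc' hsc
    have he : (fv c p0 * fv c pb) / (-(dotp V (nw c).1 * fv c pb)) =
        (fv c' p0 * fv c' pb') / (-(dotp V (nw c').1 * fv c' pb')) := le_antisymm h1 h2
    have hx1 : fv c (p0 + ((fv c p0 * fv c pb) / (-(dotp V (nw c).1 * fv c pb))) • V) = 0 :=
      root_pt hAc hsc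
    have hx2 : fv c' (p0 + ((fv c p0 * fv c pb) / (-(dotp V (nw c).1 * fv c pb))) • V) = 0 := by
      rw [he]; exact root_pt hAc' hsc'
    exact three_lines hcard hlL hcL hc'L hlc hlc'
      (line_trans hlp hp0l _)
      (((nw_spec (hIL c hcL)).2 _).2 hx1)
      (((nw_spec (hIL c' hc'L)).2 _).2 hx2)
  -- lower endpoints agree : b = b'
  have hbb' : b = b' := by
    have hTs : {m : Set Pt | m ∈ L ∧ ∃ q ∈ ccell L pb, q ∈ m} = {l, c, b} := by
      rw [hT]; ext m; simp only [mem_insert_iff, mem_singleton_iff]; tauto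
    have hT's : {m : Set Pt | m ∈ L ∧ ∃ q ∈ ccell L pb', q ∈ m} = {l, c', b'} := by
      rw [hT']; ext m; simp only [mem_insert_iff, mem_singleton_iff]; tauto
    have hnc : dotp (-V) (nw c).1 * fv c pb = -(dotp V (nw c).1 * fv c pb) := by
      rw [dotp_neg_left]; ring
    have hnb : dotp (-V) (nw b).1 * fv b pb = -(dotp V (nw b).1 * fv b pb) := by
      rw [dotp_neg_left]; ring
    have hnc' : dotp (-V) (nw c').1 * fv c' pb' = -(dotp V (nw c').1 * fv c' pb') := by
      rw [dotp_neg_left]; ring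
    have hnb' : dotp (-V) (nw b').1 * fv b' pb' = -(dotp V (nw b').1 * fv b' pb') := by
      rw [dotp_neg_left]; ring
    have hlpn := neg_param hlp
    have h1 := upper_le hIL hpb hlL hb'L hTs hlc hlb hlb' hlpn hp0l hAc hAb hAb'
      (by rw [hnc]; linarith) (by rw [hnb]; linarith) (by rw [hnb']; linarith)
    have h2 := upper_le hIL hpb' hlL hbL hT's hlc' hlb' hlb hlpn hp0l hAc' hAb' hAb
      (by rw [hnc']; linarith) (by rw [hnb']; linarith) (by rw [hnb]; linarith)
    have he : (fv b p0 * fv b pb) / (-(dotp (-V) (nw b).1 * fv b pb)) =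
        (fv b' p0 * fv b' pb') / (-(dotp (-V) (nw b').1 * fv b' pb')) := le_antisymm h1 h2
    have hx1 : fv b (p0 + ((fv b p0 * fv b pb) / (-(dotp (-V) (nw b).1 * fv b pb))) • (-V)) = 0 :=
      root_pt hAb (by rw [hnb]; linarith)
    have hx2 : fv b' (p0 + ((fv b p0 * fv b pb) / (-(dotp (-V) (nw b).1 * fv b pb))) • (-V)) = 0 := by
      rw [he]; exact root_pt hAb' (by rw [hnb']; linarith)
    exact three_lines hcard hlL hbL hb'L hlb hlb'
      (line_trans hlpn hp0l _)
      (((nw_spec (hIL b hbL)).2 _).2 hx1)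
      (((nw_spec (hIL b' hb'L)).2 _).2 hx2)
  subst hcc'
  subst hbb'
  -- all lines other than l see pb and pb' on the same side
  have hsgn : ∀ m ∈ L, m ≠ l → 0 < fv m pb * fv m pb' := by
    intro m hm hml
    have h1 : 0 < fv m p0 * fv m pb := by
      refine lt_of_le_of_ne (hp0cc m hm) (Ne.symm (mul_ne_zero ?_ (fv_ne_zero hIL hpb hm)))
      intro h0
      exact hp0not m hm hml (((nw_spec (hIL m hm)).2 p0).2 h0)
    have h2 : 0 < fv m p0 * fv m pb' := by
      refine lt_of_le_of_ne (hp0cc' m hm) (Ne.symm (mul_ne_zero ?_ (fv_ne_zero hIL hpb' hm)))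
      intro h0
      exact hp0not m hm hml (((nw_spec (hIL m hm)).2 p0).2 h0)
    have h1' : 0 < fv m pb * fv m p0 := by linarith [mul_comm (fv m p0) (fv m pb) ▸ h1]
    exact sign_transfer h1' h2
  -- the faces lie on opposite sides of l
  have hopp : fv l pb * fv l pb' < 0 := by
    rcases lt_trichotomy (fv l pb * fv l pb') 0 with h | h | h
    · exact h
    · exact absurd h (mul_ne_zero (fv_ne_zero hIL hpb hlL) (fv_ne_zero hIL hpb' hlL))
    · exfalso
      apply hne
      rw [hFc, hF'c]
      have hall : ∀ m ∈ L, 0 < fv m pb * fv m pb' := by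
        intro m hm
        by_cases hml : m = l
        · rw [hml]; exact h
        · exact hsgn m hm hml
      ext q
      simp only [cell, mem_setOf_eq]
      constructor <;> intro hq m hm
      · exact sign_transfer (hq m hm) (hall m hm)
      · have := hall m hm
        exact sign_transfer (hq m hm) (by rw [mul_comm] at this; linarith)
  -- build an unbounded ray inside closure F ∪ closure F'
  obtain ⟨x0, ⟨hx0b, hx0c⟩, -⟩ := hint b hbL c hcL hbc
  have hx0bf : fv b x0 = 0 := ((nw_spec (hIL b hbL)).2 x0).1 hx0b
  have hx0cf : fv c x0 = 0 := ((nw_spec (hIL c hcL)).2 x0).1 hx0c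
  obtain ⟨d, hd1, hd2⟩ := solve2 (not_parallel hIL hint hbL hcL hbc) (fv b pb) (fv c pb)
  have hd0 : d ≠ 0 := by
    intro h
    rw [h] at hd1
    simp only [dotp, Prod.fst_zero, Prod.snd_zero, zero_mul, add_zero] at hd1
    exact (fv_ne_zero hIL hpb hbL) hd1.symm
  have hray : ∀ t : ℝ, 0 ≤ t → x0 + t • d ∈ closure F ∪ closure F' := by
    intro t ht
    have hyb : fv b (x0 + t • d) * fv b pb = t * (fv b pb * fv b pb) := by
      rw [fv_line, hx0bf, hd1]; ring
    have hyc : fv c (x0 + t • d) * fv c pb = t * (fv c pb * fv c pb) := by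
      rw [fv_line, hx0cf, hd2]; ring
    have hybp : 0 ≤ fv b (x0 + t • d) * fv b pb := by
      rw [hyb]; exact mul_nonneg ht (mul_self_nonneg _)
    have hycp : 0 ≤ fv c (x0 + t • d) * fv c pb := by
      rw [hyc]; exact mul_nonneg ht (mul_self_nonneg _)
    by_cases hcase : 0 ≤ fv l (x0 + t • d) * fv l pb
    · left
      rw [hclF, ccell_touch hIL hpb]
      intro m hm hw
      have hmT : m ∈ ({l, b, c} : Set (Set Pt)) := by rw [← hT]; exact ⟨hm, hw⟩
      rcases hmT with rfl | rfl | rfl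
      · exact hcase
      · exact hybp
      · exact hycp
    · right
      push_neg at hcase
      rw [hclF', ccell_touch hIL hpb']
      intro m hm hw
      have hmT : m ∈ ({l, b, c} : Set (Set Pt)) := by rw [← hT']; exact ⟨hm, hw⟩
      rcases hmT with rfl | rfl | rfl
      · exact le_of_lt (sign_transfer_neg hcase hopp)
      · exact sign_transfer' hybp (hsgn m hm (Ne.symm hlb))
      · exact sign_transfer' hycp (hsgn m hm (Ne.symm hlc))
  exact no_ray (hb.closure.union hb'.closure) hd0 hray
end

section
/- Let L be a simple arrangement of n ≥ 1 non-vertical lines in ℝ². Then the set B = {(x, y) ∈ ℝ² : y < a·x + b for every line {(x, a·x + b)} ∈ L} is nonempty and is a face of L (the bottom face), and for every face F of L, the minimum length of a dual path starting at F and ending at B equals level(F) + 1. -/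
open Set

/-- A line is non-vertical if it is the graph of an affine function `x ↦ a·x + b`. -/
def NonVertical (l : Set Pt) : Prop :=
  ∃ a b : ℝ, l = {q : Pt | q.2 = a * q.1 + b}

/-- A face `F` is above a non-vertical line `l` if `y > a·x + b` for every `(x, y) ∈ F`. -/
def Above (F l : Set Pt) : Prop :=
  ∃ a b : ℝ, l = {q : Pt | q.2 = a * q.1 + b} ∧ ∀ q ∈ F, a * q.1 + b < q.2

/-- The level of a face: the number of lines of `L` that the face is above. -/
noncomputable def faceLevel (L : Finset (Set Pt)) (F : Set Pt) : ℕ :=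
  {l : Set Pt | l ∈ L ∧ Above F l}.ncard

open Classical in
noncomputable def lA (l : Set Pt) : ℝ :=
  if h : NonVertical l then h.choose else 0
open Classical in
noncomputable def lB (l : Set Pt) : ℝ :=
  if h : NonVertical l then h.choose_spec.choose else 0
noncomputable def lht (l : Set Pt) (x : ℝ) : ℝ := lA l * x + lB l

lemma graph_eq_iff {a b a' b' : ℝ}
    (h : {q : Pt | q.2 = a * q.1 + b} = {q : Pt | q.2 = a' * q.1 + b'}) :
    a = a' ∧ b = b' := by
  have h0 : ((0:ℝ), b) ∈ {q : Pt | q.2 = a * q.1 + b} := by simp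
  have h1 : ((1:ℝ), a + b) ∈ {q : Pt | q.2 = a * q.1 + b} := by simp [add_comm]
  rw [h] at h0 h1
  simp only [mem_setOf_eq] at h0 h1
  constructor <;> nlinarith

lemma line_eq {l : Set Pt} (h : NonVertical l) :
    l = {q : Pt | q.2 = lA l * q.1 + lB l} := by
  have h2 := h.choose_spec.choose_spec
  rw [lA, lB]
  rw [dif_pos h, dif_pos h]
  exact h2

lemma mem_line_iff {l : Set Pt} (h : NonVertical l) (q : Pt) :
    q ∈ l ↔ q.2 = lht l q.1 := by
  conv_lhs => rw [line_eq h]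
  rfl

lemma line_isClosed {l : Set Pt} (h : NonVertical l) : IsClosed l := by
  rw [line_eq h]
  exact isClosed_eq continuous_snd (by fun_prop)

lemma lht_continuous (l : Set Pt) : Continuous (fun r : Pt => r.2 - lht l r.1) := by
  unfold lht; fun_prop

section Arr
variable {L : Finset (Set Pt)}

lemma union_isClosed (hnv : ∀ l ∈ L, NonVertical l) : IsClosed (⋃ l ∈ L, l) :=
  Set.Finite.isClosed_biUnion L.finite_toSet (fun l hl => line_isClosed (hnv l hl))

lemma face_nonempty {F : Set Pt} (h : IsFace L F) : F.Nonempty := by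
  obtain ⟨p, hp, rfl⟩ := h
  exact ⟨p, mem_connectedComponentIn hp⟩

lemma face_preconnected {F : Set Pt} (h : IsFace L F) : IsPreconnected F := by
  obtain ⟨p, hp, rfl⟩ := h
  exact isPreconnected_connectedComponentIn

lemma face_disj {F : Set Pt} (h : IsFace L F) {l : Set Pt} (hl : l ∈ L) :
    ∀ q ∈ F, q ∉ l := by
  obtain ⟨p, hp, rfl⟩ := h
  intro q hq hql
  exact (connectedComponentIn_subset _ _ hq) (mem_biUnion hl hql)

/-- the sign of `y - (a x + b)` is constant on a connected set avoiding the line -/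
lemma face_sign {F l : Set Pt} (hF : IsPreconnected F) (hdisj : ∀ q ∈ F, q ∉ l)
    (hl : NonVertical l) {p q : Pt} (hp : p ∈ F) (hq : q ∈ F) :
    (lht l p.1 < p.2 ↔ lht l q.1 < q.2) := by
  have key : ∀ r s : Pt, r ∈ F → s ∈ F → lht l r.1 < r.2 → lht l s.1 < s.2 := by
    intro r s hr hs hrl
    by_contra hsl
    have hsne : s.2 ≠ lht l s.1 := fun h => hdisj s hs ((mem_line_iff hl s).mpr h)
    have hslt : s.2 - lht l s.1 < 0 := by
      rcases lt_or_eq_of_le (not_lt.mp hsl) with h | h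
      · linarith
      · exact absurd h hsne
    have := hF.intermediate_value hs hr ((lht_continuous l).continuousOn)
      (show (0:ℝ) ∈ Icc (s.2 - lht l s.1) (r.2 - lht l r.1) by
        constructor <;> [linarith; linarith])
    obtain ⟨w, hwF, hw⟩ := this
    exact hdisj w hwF ((mem_line_iff hl w).mpr (by linarith [sub_eq_zero.mp hw]))
  exact ⟨key p q hp hq, key q p hq hp⟩

lemma above_iff {F l : Set Pt} (hF : IsPreconnected F) (hdisj : ∀ q ∈ F, q ∉ l)
    (hl : NonVertical l) {p : Pt} (hp : p ∈ F) :
    Above F l ↔ lht l p.1 < p.2 := by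
  constructor
  · rintro ⟨a, b, hgraph, hpos⟩
    obtain ⟨ha, hb⟩ := graph_eq_iff ((line_eq hl).symm.trans hgraph)
    have := hpos p hp
    simp only [lht, ha, hb]
    linarith
  · intro hlt
    exact ⟨lA l, lB l, line_eq hl, fun q hq => (face_sign hF hdisj hl hp hq).mp hlt⟩

/-- level computed at any point of the face -/
noncomputable def levelAt (L : Finset (Set Pt)) (p : Pt) : ℕ :=
  (L.filter (fun l => lht l p.1 < p.2)).card

lemma faceLevel_eq (hnv : ∀ l ∈ L, NonVertical l) {F : Set Pt} (hF : IsFace L F)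
    {p : Pt} (hp : p ∈ F) : faceLevel L F = levelAt L p := by
  rw [faceLevel, levelAt, ← Set.ncard_coe_finset]
  congr 1
  ext l
  simp only [Finset.coe_filter, mem_setOf_eq]
  constructor
  · rintro ⟨hl, hab⟩
    exact ⟨hl, (above_iff (face_preconnected hF) (face_disj hF hl) (hnv l hl) hp).mp hab⟩
  · rintro ⟨hl, hlt⟩
    exact ⟨hl, (above_iff (face_preconnected hF) (face_disj hF hl) (hnv l hl) hp).mpr hlt⟩

/-- the bottom region -/
def botF (L : Finset (Set Pt)) : Set Pt := {p : Pt | ∀ l ∈ L, p.2 < lht l p.1}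

lemma botF_convex : Convex ℝ (botF L) := by
  have : botF L = ⋂ l ∈ L, {p : Pt | p.2 - lA l * p.1 < lB l} := by
    ext p
    constructor
    · intro h
      refine mem_iInter₂.mpr fun l hl => ?_
      have h2 := h l hl
      simp only [lht] at h2
      simp only [mem_setOf_eq]
      linarith
    · intro h l hl
      have h2 := mem_iInter₂.mp h l hl
      simp only [mem_setOf_eq] at h2
      simp only [lht]
      linarith
  rw [this]
  refine convex_iInter₂ fun l _ => convex_halfSpace_lt ?_ _
  exact ⟨fun x y => by simp; ring, fun c x => by simp; ring⟩

lemma botF_subset (hnv : ∀ l ∈ L, NonVertical l) : botF L ⊆ (⋃ l ∈ L, l)ᶜ := by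
  intro p hp hmem
  obtain ⟨l, hl, hpl⟩ := mem_iUnion₂.mp hmem
  exact absurd ((mem_line_iff (hnv l hl) p).mp hpl) (ne_of_lt (hp l hl))

lemma botF_eq_component (hnv : ∀ l ∈ L, NonVertical l) {p : Pt} (hp : p ∈ botF L) :
    botF L = connectedComponentIn (⋃ l ∈ L, l)ᶜ p := by
  apply Subset.antisymm
  · exact botF_convex.isPreconnected.subset_connectedComponentIn hp (botF_subset hnv)
  · intro q hq
    intro l hl
    have hdisj : ∀ r ∈ connectedComponentIn (⋃ l ∈ L, l)ᶜ p, r ∉ l := by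
      intro r hr hrl
      exact (connectedComponentIn_subset _ _ hr) (mem_biUnion hl hrl)
    have hsign := face_sign isPreconnected_connectedComponentIn hdisj (hnv l hl)
      (mem_connectedComponentIn (botF_subset hnv hp)) hq
    have hqne : q.2 ≠ lht l q.1 := fun h => hdisj q hq ((mem_line_iff (hnv l hl) q).mpr h)
    rcases lt_trichotomy q.2 (lht l q.1) with h | h | h
    · exact h
    · exact absurd h hqne
    · exact absurd (hsign.mpr h) (not_lt.mpr (le_of_lt (hp l hl)))

lemma botF_isFace (hnv : ∀ l ∈ L, NonVertical l) {p : Pt} (hp : p ∈ botF L) :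
    IsFace L (botF L) :=
  ⟨p, fun h => (botF_subset hnv hp) h, botF_eq_component hnv hp⟩

lemma faceLevel_botF (hnv : ∀ l ∈ L, NonVertical l) {p : Pt} (hp : p ∈ botF L) :
    faceLevel L (botF L) = 0 := by
  rw [faceLevel_eq hnv (botF_isFace hnv hp) hp, levelAt]
  rw [Finset.card_eq_zero, Finset.filter_eq_empty_iff]
  intro l hl
  exact not_lt.mpr (le_of_lt (hp l hl))


lemma adjacent_level (hnv : ∀ l ∈ L, NonVertical l) {F F' : Set Pt}
    (hF : IsFace L F) (hF' : IsFace L F') (hA : Adjacent L F F') :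
    faceLevel L F ≤ faceLevel L F' + 1 := by
  classical
  obtain ⟨hne, p, ⟨hpF, hpF'⟩, l0, ⟨hl0L, hpl0⟩, huniq⟩ := hA
  -- p is not on any line other than l0
  have hnotmem : ∀ l ∈ L, l ≠ l0 → p ∉ l := by
    intro l hl hne hpl
    exact hne (huniq l ⟨hl, hpl⟩)
  -- a neighbourhood of p where the sign w.r.t. every line other than l0 is fixed
  set V : Set Pt := ⋂ l ∈ L.erase l0, {r : Pt | 0 < (r.2 - lht l r.1) * (p.2 - lht l p.1)}
    with hV
  have hVopen : IsOpen V := by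
    refine isOpen_biInter_finset fun l _ => ?_
    have : Continuous (fun r : Pt => (r.2 - lht l r.1) * (p.2 - lht l p.1)) := by
      unfold lht; fun_prop
    exact isOpen_lt continuous_const this
  have hpV : p ∈ V := by
    refine mem_iInter₂.mpr fun l hl => ?_
    have hlL := Finset.mem_of_mem_erase hl
    have hne := Finset.ne_of_mem_erase hl
    have hne0 : p.2 - lht l p.1 ≠ 0 := by
      intro h
      exact hnotmem l hlL hne ((mem_line_iff (hnv l hlL) p).mpr (by linarith))
    have := mul_self_pos.mpr hne0
    simpa [mem_setOf_eq] using this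
  -- pick points of F and F' inside V
  obtain ⟨q, hqV, hqF⟩ := mem_closure_iff.mp hpF V hVopen hpV
  obtain ⟨q', hq'V, hq'F⟩ := mem_closure_iff.mp hpF' V hVopen hpV
  rw [faceLevel_eq hnv hF hqF, faceLevel_eq hnv hF' hq'F, levelAt, levelAt]
  have hsub : L.filter (fun l => lht l q.1 < q.2) ⊆
      insert l0 (L.filter (fun l => lht l q'.1 < q'.2)) := by
    intro l hl
    obtain ⟨hlL, hlq⟩ := Finset.mem_filter.mp hl
    by_cases h0 : l = l0
    · subst h0
      exact Finset.mem_insert_self _ _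
    · have hlE : l ∈ L.erase l0 := Finset.mem_erase.mpr ⟨h0, hlL⟩
      have h1 := mem_iInter₂.mp hqV l hlE
      have h2 := mem_iInter₂.mp hq'V l hlE
      simp only [mem_setOf_eq] at h1 h2
      refine Finset.mem_insert_of_mem (Finset.mem_filter.mpr ⟨hlL, ?_⟩)
      nlinarith
  calc (L.filter (fun l => lht l q.1 < q.2)).card
      ≤ (insert l0 (L.filter (fun l => lht l q'.1 < q'.2))).card := Finset.card_le_card hsub
    _ ≤ (L.filter (fun l => lht l q'.1 < q'.2)).card + 1 := Finset.card_insert_le _ _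

lemma lower_bound (hnv : ∀ l ∈ L, NonVertical l) {b : Pt} (hb : b ∈ botF L) :
    ∀ P : List (Set Pt), IsDualPath L P → P.getLast? = some (botF L) →
      ∀ F, P.head? = some F → faceLevel L F + 1 ≤ P.length := by
  intro P
  induction P with
  | nil => intro _ _ F hF; simp at hF
  | cons G t ih =>
    intro hP hlast F hhead
    have hFG : F = G := by simpa using hhead.symm
    subst hFG
    match t, hlast with
    | [], hlast =>
      have : F = botF L := by simpa using hlast
      subst this
      simp [faceLevel_botF hnv hb]
    | G' :: t', hlast =>
      have hP' : IsDualPath L (G' :: t') :=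
        ⟨fun x hx => hP.1 x (List.mem_cons_of_mem _ hx), hP.2.1.of_cons,
          (List.isChain_cons_cons.mp hP.2.2).2⟩
      have hlast' : (G' :: t').getLast? = some (botF L) := by
        rwa [List.getLast?_cons_cons] at hlast
      have hIH := ih hP' hlast' G' rfl
      have hadj : Adjacent L F G' := (List.isChain_cons_cons.mp hP.2.2).1
      have hlev := adjacent_level hnv (hP.1 F List.mem_cons_self)
        (hP.1 G' (by simp)) hadj
      simp only [List.length_cons] at hIH ⊢
      omega


open Classical in
lemma build_path (hnv : ∀ l ∈ L, NonVertical l)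
    {x0 : ℝ} (hx0 : ∀ l ∈ L, ∀ l' ∈ L, lht l x0 = lht l' x0 → l = l') :
    ∀ k : ℕ, ∀ y0 : ℝ, (∀ l ∈ L, y0 ≠ lht l x0) →
      (L.filter (fun l => lht l x0 < y0)).card = k →
      ∃ P : List (Set Pt), IsDualPath L P ∧
        P.head? = some (connectedComponentIn (⋃ l ∈ L, l)ᶜ ((x0, y0) : Pt)) ∧
        P.getLast? = some (botF L) ∧ P.length = k + 1 ∧
        ∀ G ∈ P, faceLevel L G ≤ k := by
  intro k
  induction k with
  | zero =>
    intro y0 hy0 hcard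
    have hbot : ((x0, y0) : Pt) ∈ botF L := by
      intro l hl
      show y0 < lht l x0
      rcases lt_trichotomy y0 (lht l x0) with h | h | h
      · exact h
      · exact absurd h (hy0 l hl)
      · exfalso
        have hmem : l ∈ L.filter (fun l => lht l x0 < y0) := Finset.mem_filter.mpr ⟨hl, h⟩
        rw [Finset.card_eq_zero.mp hcard] at hmem
        exact absurd hmem (Finset.notMem_empty l)
    refine ⟨[botF L], ⟨?_, ?_, ?_⟩, ?_, ?_, ?_, ?_⟩
    · intro G hG
      have : G = botF L := by simpa using hG
      subst this
      exact botF_isFace hnv hbot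
    · simp
    · exact List.isChain_singleton _
    · simp only [List.head?_cons]
      exact congrArg some (botF_eq_component hnv hbot)
    · simp
    · simp
    · intro G hG
      have : G = botF L := by simpa using hG
      subst this
      simp [faceLevel_botF hnv hbot]
  | succ k ih =>
    intro y0 hy0 hcard
    set S := L.filter (fun l => lht l x0 < y0) with hS
    have hSne : S.Nonempty := Finset.card_pos.mp (by rw [hcard]; omega)
    obtain ⟨l1, hl1S, hmax⟩ := S.exists_max_image (fun l => lht l x0) hSne
    have hl1L : l1 ∈ L := (Finset.mem_filter.mp hl1S).1
    set c := lht l1 x0 with hc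
    have hcy0 : c < y0 := (Finset.mem_filter.mp hl1S).2
    set T := S.erase l1 with hT
    have hTcard : T.card = k := by
      rw [hT, Finset.card_erase_of_mem hl1S, hcard]
      omega
    have hTlt : ∀ l ∈ T, lht l x0 < c := by
      intro l hl
      have hlS := Finset.mem_of_mem_erase hl
      have hne := Finset.ne_of_mem_erase hl
      rcases lt_or_eq_of_le (hmax l hlS) with h | h
      · exact h
      · exact absurd (hx0 l (Finset.mem_filter.mp hlS).1 l1 hl1L h) hne
    set m := if hTne : T.Nonempty then (T.image (fun l => lht l x0)).max' (hTne.image _)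
      else c - 1 with hm
    have hmc : m < c := by
      rw [hm]
      split_ifs with hTne
      · obtain ⟨l, hlT, hlm⟩ := Finset.mem_image.mp ((T.image (fun l => lht l x0)).max'_mem
          (hTne.image _))
        rw [← hlm]
        exact hTlt l hlT
      · linarith
    have hmle : ∀ l ∈ T, lht l x0 ≤ m := by
      intro l hl
      rw [hm]
      split_ifs with hTne
      · exact Finset.le_max' (T.image (fun l => lht l x0)) (lht l x0)
          (Finset.mem_image_of_mem _ hl)
      · exact absurd ⟨l, hl⟩ hTne
    set y' := (m + c) / 2 with hy'
    have hmy' : m < y' := by rw [hy']; linarith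
    have hy'c : y' < c := by rw [hy']; linarith
    have hy'y0 : y' < y0 := by linarith
    have hy'iff : ∀ l ∈ L, (lht l x0 < y' ↔ l ∈ T) := by
      intro l hl
      constructor
      · intro h
        have hlS : l ∈ S := Finset.mem_filter.mpr ⟨hl, by linarith⟩
        refine Finset.mem_erase.mpr ⟨?_, hlS⟩
        intro heq
        rw [heq] at h
        rw [← hc] at h
        linarith
      · intro hlT
        have := hmle l hlT
        linarith
    have hy'ne : ∀ l ∈ L, y' ≠ lht l x0 := by
      intro l hl heq
      have hlS : l ∈ S := Finset.mem_filter.mpr ⟨hl, by rw [← heq]; linarith⟩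
      have hne1 : l ≠ l1 := by
        intro h
        rw [h] at heq
        rw [← hc] at heq
        linarith
      have := hmle l (Finset.mem_erase.mpr ⟨hne1, hlS⟩)
      rw [← heq] at this
      linarith
    have hfilter' : L.filter (fun l => lht l x0 < y') = T := by
      apply Finset.ext
      intro l
      constructor
      · intro h
        obtain ⟨hl, hlt⟩ := Finset.mem_filter.mp h
        exact (hy'iff l hl).mp hlt
      · intro h
        have hlL : l ∈ L := (Finset.mem_filter.mp (Finset.mem_of_mem_erase h)).1
        exact Finset.mem_filter.mpr ⟨hlL, (hy'iff l hlL).mpr h⟩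
    obtain ⟨P', hP', hhead', hlast', hlen', hlev'⟩ := ih y' hy'ne (by rw [hfilter', hTcard])
    -- names for the two faces
    set U := (⋃ l ∈ L, l) with hU
    have hpU : ((x0, y0) : Pt) ∉ U := by
      intro hmem
      obtain ⟨l, hl, hpl⟩ := mem_iUnion₂.mp hmem
      exact hy0 l hl ((mem_line_iff (hnv l hl) _).mp hpl)
    have hp'U : ((x0, y') : Pt) ∉ U := by
      intro hmem
      obtain ⟨l, hl, hpl⟩ := mem_iUnion₂.mp hmem
      exact hy'ne l hl ((mem_line_iff (hnv l hl) _).mp hpl)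
    set Fp := connectedComponentIn Uᶜ ((x0, y0) : Pt) with hFp
    set Fp' := connectedComponentIn Uᶜ ((x0, y') : Pt) with hFp'
    have hFpFace : IsFace L Fp := ⟨_, hpU, rfl⟩
    have hFp'Face : IsFace L Fp' := ⟨_, hp'U, rfl⟩
    have hpFp : ((x0, y0) : Pt) ∈ Fp := mem_connectedComponentIn hpU
    have hp'Fp' : ((x0, y') : Pt) ∈ Fp' := mem_connectedComponentIn hp'U
    have hlevFp : faceLevel L Fp = k + 1 := by
      rw [faceLevel_eq hnv hFpFace hpFp, levelAt]
      exact hcard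
    have hlevFp' : faceLevel L Fp' = k := by
      rw [faceLevel_eq hnv hFp'Face hp'Fp', levelAt]
      rw [show ((x0, y') : Pt).1 = x0 from rfl, show ((x0, y') : Pt).2 = y' from rfl]
      rw [hfilter', hTcard]
    -- the vertical segments
    have hseg1sub : (fun t : ℝ => ((x0, t) : Pt)) '' Ioc c y0 ⊆ Uᶜ := by
      rintro _ ⟨t, htIoc, rfl⟩ hmem
      obtain ⟨l, hl, hpl⟩ := mem_iUnion₂.mp hmem
      have ht : t = lht l x0 := (mem_line_iff (hnv l hl) _).mp hpl
      by_cases hlS : l ∈ S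
      · have h1 := hmax l hlS
        have h2 := htIoc.1
        linarith [ht ▸ h2]
      · have h1 : ¬ lht l x0 < y0 := fun h => hlS (Finset.mem_filter.mpr ⟨hl, h⟩)
        push_neg at h1
        have h2 := htIoc.2
        have h3 := hy0 l hl
        rcases lt_or_eq_of_le h1 with h | h
        · linarith
        · exact h3 h
    have hseg2sub : (fun t : ℝ => ((x0, t) : Pt)) '' Ico y' c ⊆ Uᶜ := by
      rintro _ ⟨t, htIco, rfl⟩ hmem
      obtain ⟨l, hl, hpl⟩ := mem_iUnion₂.mp hmem
      have ht : t = lht l x0 := (mem_line_iff (hnv l hl) _).mp hpl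
      have hlS : l ∈ S := Finset.mem_filter.mpr ⟨hl, by rw [← ht]; linarith [htIco.2]⟩
      have hne1 : l ≠ l1 := by
        intro h
        rw [h] at ht
        rw [← hc] at ht
        linarith [htIco.2]
      have := hmle l (Finset.mem_erase.mpr ⟨hne1, hlS⟩)
      rw [← ht] at this
      linarith [htIco.1]
    have hcont : Continuous (fun t : ℝ => ((x0, t) : Pt)) := by fun_prop
    have hseg1Fp : (fun t : ℝ => ((x0, t) : Pt)) '' Ioc c y0 ⊆ Fp := by
      refine IsPreconnected.subset_connectedComponentIn ?_ ?_ hseg1sub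
      · exact isPreconnected_Ioc.image _ hcont.continuousOn
      · exact ⟨y0, ⟨hcy0, le_refl _⟩, rfl⟩
    have hseg2Fp' : (fun t : ℝ => ((x0, t) : Pt)) '' Ico y' c ⊆ Fp' := by
      refine IsPreconnected.subset_connectedComponentIn ?_ ?_ hseg2sub
      · exact isPreconnected_Ico.image _ hcont.continuousOn
      · exact ⟨y', ⟨le_refl _, hy'c⟩, rfl⟩
    set w := ((x0, c) : Pt) with hw
    have hwFp : w ∈ closure Fp := by
      refine closure_mono hseg1Fp (map_mem_closure hcont ?_ (mapsTo_image _ _))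
      rw [closure_Ioc (ne_of_lt hcy0)]
      exact ⟨le_refl _, le_of_lt hcy0⟩
    have hwFp' : w ∈ closure Fp' := by
      refine closure_mono hseg2Fp' (map_mem_closure hcont ?_ (mapsTo_image _ _))
      rw [closure_Ico (ne_of_lt hy'c)]
      exact ⟨le_of_lt hy'c, le_refl _⟩
    have hFpne : Fp ≠ Fp' := by
      intro h
      rw [h, hlevFp'] at hlevFp
      omega
    have hadj : Adjacent L Fp Fp' := by
      refine ⟨hFpne, w, ⟨hwFp, hwFp'⟩, l1, ⟨hl1L, (mem_line_iff (hnv l1 hl1L) w).mpr rfl⟩, ?_⟩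
      rintro l ⟨hlL, hwl⟩
      have : c = lht l x0 := (mem_line_iff (hnv l hlL) w).mp hwl
      exact hx0 l hlL l1 hl1L this.symm
    -- assemble the path
    obtain ⟨G, t', rfl⟩ : ∃ G t', P' = G :: t' := by
      cases P' with
      | nil => simp at hhead'
      | cons G t' => exact ⟨G, t', rfl⟩
    have hGFp' : G = Fp' := by simpa using hhead'
    subst hGFp'
    refine ⟨Fp :: Fp' :: t', ⟨?_, ?_, ?_⟩, ?_, ?_, ?_, ?_⟩
    · intro F hF
      rcases List.mem_cons.mp hF with h | h
      · exact h ▸ hFpFace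
      · exact hP'.1 F h
    · refine List.nodup_cons.mpr ⟨?_, hP'.2.1⟩
      intro hmem
      have := hlev' Fp hmem
      omega
    · exact List.isChain_cons_cons.mpr ⟨hadj, hP'.2.2⟩
    · rfl
    · rw [List.getLast?_cons_cons]
      exact hlast'
    · simp only [List.length_cons]
      simp only [List.length_cons] at hlen'
      omega
    · intro F hF
      rcases List.mem_cons.mp hF with h | h
      · rw [h, hlevFp]
      · exact le_trans (hlev' F h) (Nat.le_succ k)

end Arr

/-- The bottom face `B` (points below every line) of a simple arrangement of `n ≥ 1`
non-vertical lines is a nonempty face, and for every face `F` the minimum length of a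
dual path from `F` to `B` equals `level(F) + 1`. -/
theorem statement9 (n : ℕ) (hn : 1 ≤ n) (L : Finset (Set Pt))
    (hL : SimpleArrangement L) (hcard : L.card = n)
    (hnv : ∀ l ∈ L, NonVertical l)
    (B : Set Pt)
    (hB : B = {p : Pt | ∀ l ∈ L, ∀ a b : ℝ,
      l = {q : Pt | q.2 = a * q.1 + b} → p.2 < a * p.1 + b}) :
    B.Nonempty ∧ IsFace L B ∧
    ∀ F : Set Pt, IsFace L F →
      IsLeast {m : ℕ | ∃ P : List (Set Pt), IsDualPath L P ∧
          P.head? = some F ∧ P.getLast? = some B ∧ P.length = m}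
        (faceLevel L F + 1) := by
  subst hB
  have hBbot : {p : Pt | ∀ l ∈ L, ∀ a b : ℝ,
      l = {q : Pt | q.2 = a * q.1 + b} → p.2 < a * p.1 + b} = botF L := by
    ext p
    constructor
    · intro h l hl
      have := h l hl (lA l) (lB l) (line_eq (hnv l hl))
      simpa [lht] using this
    · intro h l hl a b hg
      obtain ⟨ha, hb⟩ := graph_eq_iff ((line_eq (hnv l hl)).symm.trans hg)
      have h2 := h l hl
      simp only [lht] at h2
      rw [ha, hb] at h2
      exact h2
  rw [hBbot]
  -- the bottom face is nonempty
  have hLne : L.Nonempty := Finset.card_pos.mp (by rw [hcard]; omega)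
  obtain ⟨lstar, hlstar, hlstarmin⟩ := Finset.exists_min_image L lB hLne
  set pb : Pt := ((0 : ℝ), lB lstar - 1) with hpbdef
  have hpb : pb ∈ botF L := by
    intro l hl
    show lB lstar - 1 < lht l 0
    have := hlstarmin l hl
    simp only [lht]
    linarith
  refine ⟨⟨pb, hpb⟩, botF_isFace hnv hpb, ?_⟩
  intro F hF
  constructor
  · -- membership: construct a dual path of the right length
    obtain ⟨p0, hp0U, hFeq⟩ := hF
    have hUopen : IsOpen (⋃ l ∈ L, l)ᶜ := (union_isClosed hnv).isOpen_compl
    have hFopen : IsOpen F := hFeq ▸ hUopen.connectedComponentIn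
    have hp0F : p0 ∈ F := hFeq ▸ mem_connectedComponentIn hp0U
    obtain ⟨r, hr, hball⟩ := Metric.isOpen_iff.mp hFopen p0 hp0F
    set X : Set ℝ := ⋃ l ∈ L, ⋃ l' ∈ L,
      {x : ℝ | l ≠ l' ∧ ∃ y : ℝ, ((x, y) : Pt) ∈ l ∧ ((x, y) : Pt) ∈ l'} with hX
    have hXfin : X.Finite := by
      refine Set.Finite.biUnion L.finite_toSet fun l hl =>
        Set.Finite.biUnion L.finite_toSet fun l' hl' => Set.Subsingleton.finite ?_
      rintro x1 ⟨hne, y1, h11, h12⟩ x2 ⟨_, y2, h21, h22⟩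
      obtain ⟨q, hq, huniq⟩ := hL.2.1 l hl l' hl' hne
      have e1 := huniq (x1, y1) ⟨h11, h12⟩
      have e2 := huniq (x2, y2) ⟨h21, h22⟩
      exact congrArg Prod.fst (e1.trans e2.symm)
    obtain ⟨x0, hx0mem, hx0X⟩ :=
      ((Set.Ioo_infinite (show p0.1 - r < p0.1 + r by linarith)).diff hXfin).nonempty
    set p : Pt := (x0, p0.2) with hpdef
    have hpF : p ∈ F := by
      apply hball
      rw [Metric.mem_ball, Prod.dist_eq]
      apply max_lt
      · rw [Real.dist_eq, abs_sub_lt_iff]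
        obtain ⟨h1, h2⟩ := hx0mem
        constructor <;> [linarith; linarith]
      · simpa [hpdef] using hr
    have hFp : F = connectedComponentIn (⋃ l ∈ L, l)ᶜ p := by
      rw [hFeq]
      exact connectedComponentIn_eq (hFeq ▸ hpF)
    have hx0good : ∀ l ∈ L, ∀ l' ∈ L, lht l x0 = lht l' x0 → l = l' := by
      intro l hl l' hl' heq
      by_contra hne
      apply hx0X
      refine mem_iUnion₂.mpr ⟨l, hl, mem_iUnion₂.mpr ⟨l', hl', hne, lht l x0, ?_, ?_⟩⟩
      · exact (mem_line_iff (hnv l hl) _).mpr rfl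
      · exact (mem_line_iff (hnv l' hl') _).mpr (by rw [heq])
    have hpU : p ∉ (⋃ l ∈ L, l) := by
      rw [hFp] at hpF
      exact fun h => (connectedComponentIn_subset _ _ hpF) h
    have hy0ne : ∀ l ∈ L, p0.2 ≠ lht l x0 := by
      intro l hl heq
      exact hpU (mem_iUnion₂.mpr ⟨l, hl, (mem_line_iff (hnv l hl) p).mpr heq⟩)
    have hflev : (L.filter (fun l => lht l x0 < p0.2)).card = faceLevel L F := by
      rw [faceLevel_eq hnv ⟨p0, hp0U, hFeq⟩ hpF, levelAt]
    obtain ⟨P, hP, hhead, hlast, hlen, _⟩ := build_path hnv hx0good (faceLevel L F) p0.2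
      hy0ne hflev
    exact ⟨P, hP, by rw [hhead, ← hFp], hlast, hlen⟩
  · rintro m ⟨P, hP, hh, hl, rfl⟩
    exact lower_bound hnv hpb P hP hl F hh
end

section
/- Let L be a simple arrangement of non-vertical lines in ℝ². If F and F' are adjacent faces of L, then their levels differ by exactly one: |level(F) − level(F')| = 1. -/
open Set

/-- Parameters of a line graph are unique. -/
lemma my_graph_eq {a b a' b' : ℝ}
    (h : {q : ℝ × ℝ | q.2 = a * q.1 + b} = {q : ℝ × ℝ | q.2 = a' * q.1 + b'}) :
    a = a' ∧ b = b' := by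
  have h0 : ((0:ℝ), b) ∈ {q : ℝ × ℝ | q.2 = a * q.1 + b} := by simp
  have h1 : ((1:ℝ), a + b) ∈ {q : ℝ × ℝ | q.2 = a * q.1 + b} := by simp [add_comm]
  rw [h] at h0 h1
  simp only [mem_setOf_eq] at h0 h1
  constructor <;> nlinarith

lemma my_above_iff {F l : Set (ℝ × ℝ)} {a b : ℝ}
    (hl : l = {q : ℝ × ℝ | q.2 = a * q.1 + b}) :
    Above F l ↔ ∀ q ∈ F, a * q.1 + b < q.2 := by
  constructor
  · rintro ⟨a', b', hl', hab⟩
    obtain ⟨ha, hb⟩ := my_graph_eq (hl.symm.trans hl')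
    intro q hq
    have := hab q hq
    rw [ha, hb]
    exact this
  · intro h; exact ⟨a, b, hl, h⟩

lemma my_sign_dichotomy {F : Set (ℝ × ℝ)} (hconn : IsPreconnected F) {g : ℝ × ℝ → ℝ}
    (hg : Continuous g) (h0 : ∀ q ∈ F, g q ≠ 0) :
    (∀ q ∈ F, 0 < g q) ∨ (∀ q ∈ F, g q < 0) := by
  by_contra h
  push_neg at h
  obtain ⟨⟨q1, hq1, hq1'⟩, ⟨q2, hq2, hq2'⟩⟩ := h
  have himg : IsPreconnected (g '' F) := hconn.image g hg.continuousOn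
  have hmem : (0:ℝ) ∈ g '' F := by
    apply himg.Icc_subset ⟨q1, hq1, rfl⟩ ⟨q2, hq2, rfl⟩
    exact ⟨hq1', hq2'⟩
  obtain ⟨q, hq, hq0⟩ := hmem
  exact h0 q hq hq0

lemma my_face_preconnected {L : Finset (Set (ℝ × ℝ))} {F : Set (ℝ × ℝ)} (hF : IsFace L F) :
    IsPreconnected F := by
  obtain ⟨p, hp, rfl⟩ := hF
  exact ((isConnected_connectedComponentIn_iff).mpr (mem_compl hp)).isPreconnected

lemma my_face_subset {L : Finset (Set (ℝ × ℝ))} {F : Set (ℝ × ℝ)} (hF : IsFace L F) :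
    F ⊆ (⋃ l ∈ L, l)ᶜ := by
  obtain ⟨p, hp, rfl⟩ := hF
  exact connectedComponentIn_subset _ _

lemma my_face_eq {L : Finset (Set (ℝ × ℝ))} {F : Set (ℝ × ℝ)} (hF : IsFace L F)
    {q : ℝ × ℝ} (hq : q ∈ F) :
    connectedComponentIn (⋃ l ∈ L, l)ᶜ q = F := by
  obtain ⟨p, hp, rfl⟩ := hF
  exact (connectedComponentIn_eq (F := (⋃ l ∈ L, l)ᶜ) (x := p) hq).symm

/-- Sign of the affine functional at a closure point determines Above. -/
lemma my_above_iff_pos_at {L : Finset (Set (ℝ × ℝ))} {F l : Set (ℝ × ℝ)}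
    (hF : IsFace L F) (hlL : l ∈ L) {a b : ℝ}
    (hl : l = {q : ℝ × ℝ | q.2 = a * q.1 + b}) {p : ℝ × ℝ}
    (hp : p ∈ closure F) (hpl : p ∉ l) :
    Above F l ↔ a * p.1 + b < p.2 := by
  have hcont : Continuous (fun q : ℝ × ℝ => q.2 - (a * q.1 + b)) := by continuity
  have hne : ∀ q ∈ F, (fun q : ℝ × ℝ => q.2 - (a * q.1 + b)) q ≠ 0 := by
    intro q hq h0
    simp only at h0
    exact (my_face_subset hF hq) (mem_biUnion hlL (by rw [hl]; simp only [mem_setOf_eq]; linarith))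
  have hdi := my_sign_dichotomy (my_face_preconnected hF) hcont hne
  have hpne : p.2 - (a * p.1 + b) ≠ 0 := by
    intro h; apply hpl; rw [hl]; simp only [mem_setOf_eq]; linarith
  constructor
  · intro hab
    rw [my_above_iff hl] at hab
    have hsub : F ⊆ {q : ℝ × ℝ | 0 ≤ q.2 - (a * q.1 + b)} := by
      intro q hq; have := hab q hq; simp only [mem_setOf_eq]; linarith
    have hcl : IsClosed {q : ℝ × ℝ | 0 ≤ q.2 - (a * q.1 + b)} :=
      isClosed_le continuous_const hcont
    have := (closure_minimal hsub hcl) hp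
    simp only [mem_setOf_eq] at this
    cases lt_or_eq_of_le this with
    | inl h => linarith
    | inr h => exact absurd h.symm hpne
  · intro hpos
    rw [my_above_iff hl]
    rcases hdi with h | h
    · intro q hq; have := h q hq; linarith
    · exfalso
      have hsub : F ⊆ {q : ℝ × ℝ | q.2 - (a * q.1 + b) ≤ 0} := by
        intro q hq; have := h q hq; simp only [mem_setOf_eq]; linarith
      have hcl : IsClosed {q : ℝ × ℝ | q.2 - (a * q.1 + b) ≤ 0} :=
        isClosed_le hcont continuous_const
      have := (closure_minimal hsub hcl) hp
      simp only [mem_setOf_eq] at this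
      linarith

/-- Two faces both meeting a convex set inside the complement are equal. -/
lemma my_faces_eq {L : Finset (Set (ℝ × ℝ))} {F F' C : Set (ℝ × ℝ)}
    (hF : IsFace L F) (hF' : IsFace L F') (hC : Convex ℝ C)
    (hCs : C ⊆ (⋃ l ∈ L, l)ᶜ)
    (h1 : (F ∩ C).Nonempty) (h2 : (F' ∩ C).Nonempty) : F = F' := by
  obtain ⟨q, hqF, hqC⟩ := h1
  obtain ⟨q', hq'F, hq'C⟩ := h2
  have hsub : C ⊆ connectedComponentIn (⋃ l ∈ L, l)ᶜ q :=
    hC.isPreconnected.subset_connectedComponentIn hqC hCs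
  rw [my_face_eq hF hqF] at hsub
  have hq'F2 : q' ∈ F := hsub hq'C
  rw [← my_face_eq hF hq'F2, my_face_eq hF' hq'F]

set_option maxHeartbeats 1000000

/-- In a simple arrangement of non-vertical lines, the levels of adjacent faces differ by
exactly one. -/
theorem statement15 (L : Finset (Set Pt)) (hL : SimpleArrangement L)
    (hnv : ∀ l ∈ L, NonVertical l)
    (F F' : Set Pt) (hF : IsFace L F) (hF' : IsFace L F')
    (hadj : Adjacent L F F') :
    |(faceLevel L F : ℤ) - (faceLevel L F' : ℤ)| = 1 := by
  classical
  obtain ⟨hne, p, ⟨hpF, hpF'⟩, l₀, ⟨hl₀L, hpl₀⟩, huniq⟩ := hadj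
  obtain ⟨a₀, b₀, hl₀⟩ := hnv l₀ hl₀L
  have hpother : ∀ l ∈ L, l ≠ l₀ → p ∉ l := fun l hlL hne' hpl => hne' (huniq l ⟨hlL, hpl⟩)
  -- Step A : agreement on all other lines
  have stepA : ∀ l ∈ L, l ≠ l₀ → (Above F l ↔ Above F' l) := by
    intro l hlL hlne
    obtain ⟨a, b, hlab⟩ := hnv l hlL
    rw [my_above_iff_pos_at hF hlL hlab hpF (hpother l hlL hlne),
        my_above_iff_pos_at hF' hlL hlab hpF' (hpother l hlL hlne)]
  -- Step B : opposite sides of l₀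
  have hUopen : IsOpen (⋃ l ∈ L.erase l₀, l)ᶜ := by
    rw [isOpen_compl_iff]
    apply isClosed_biUnion_finset
    intro l hl
    obtain ⟨a, b, rfl⟩ := hnv l (Finset.mem_of_mem_erase hl)
    exact isClosed_eq continuous_snd (by continuity)
  have hpU : p ∈ (⋃ l ∈ L.erase l₀, l)ᶜ := by
    simp only [mem_compl_iff, mem_iUnion, not_exists]
    intro l hl hpl
    exact hpother l (Finset.mem_of_mem_erase hl) (Finset.ne_of_mem_erase hl) hpl
  obtain ⟨ε, hε, hball⟩ := Metric.isOpen_iff.mp hUopen p hpU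
  obtain ⟨q, hqball, hqF⟩ := mem_closure_iff.mp hpF (Metric.ball p ε)
    Metric.isOpen_ball (Metric.mem_ball_self hε)
  obtain ⟨q', hq'ball, hq'F'⟩ := mem_closure_iff.mp hpF' (Metric.ball p ε)
    Metric.isOpen_ball (Metric.mem_ball_self hε)
  have hlin : IsLinearMap ℝ (fun q : Pt => q.2 - a₀ * q.1) := by
    constructor
    · intro x y; simp [Prod.snd_add, Prod.fst_add]; ring
    · intro c x; simp [Prod.smul_snd, Prod.smul_fst, smul_eq_mul]; ring
  have hconvP : Convex ℝ (Metric.ball p ε ∩ {q : Pt | b₀ < q.2 - a₀ * q.1}) :=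
    (convex_ball p ε).inter (convex_halfSpace_gt hlin b₀)
  have hconvN : Convex ℝ (Metric.ball p ε ∩ {q : Pt | q.2 - a₀ * q.1 < b₀}) :=
    (convex_ball p ε).inter (convex_halfSpace_lt hlin b₀)
  have hsub : ∀ r : Pt, r ∈ Metric.ball p ε → r ∉ l₀ → r ∈ (⋃ l ∈ L, l)ᶜ := by
    intro r hrball hrl₀
    simp only [mem_compl_iff, mem_iUnion, not_exists]
    intro l hlL hrl
    by_cases hll : l = l₀
    · exact hrl₀ (hll ▸ hrl)
    · have := hball hrball
      simp only [mem_compl_iff, mem_iUnion, not_exists] at this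
      exact this l (Finset.mem_erase.mpr ⟨hll, hlL⟩) hrl
  have hsubP : Metric.ball p ε ∩ {q : Pt | b₀ < q.2 - a₀ * q.1} ⊆ (⋃ l ∈ L, l)ᶜ := by
    rintro r ⟨hr1, hr2⟩
    apply hsub r hr1
    rw [hl₀]; simp only [mem_setOf_eq] at hr2 ⊢; intro h; linarith
  have hsubN : Metric.ball p ε ∩ {q : Pt | q.2 - a₀ * q.1 < b₀} ⊆ (⋃ l ∈ L, l)ᶜ := by
    rintro r ⟨hr1, hr2⟩
    apply hsub r hr1
    rw [hl₀]; simp only [mem_setOf_eq] at hr2 ⊢; intro h; linarith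
  have hcont : Continuous (fun r : Pt => r.2 - (a₀ * r.1 + b₀)) := by continuity
  have hneF : ∀ r ∈ F, (fun r : Pt => r.2 - (a₀ * r.1 + b₀)) r ≠ 0 := by
    intro r hr h0
    simp only at h0
    exact (my_face_subset hF hr) (mem_biUnion hl₀L
      (by rw [hl₀]; simp only [mem_setOf_eq]; linarith))
  have hneF' : ∀ r ∈ F', (fun r : Pt => r.2 - (a₀ * r.1 + b₀)) r ≠ 0 := by
    intro r hr h0
    simp only at h0
    exact (my_face_subset hF' hr) (mem_biUnion hl₀L
      (by rw [hl₀]; simp only [mem_setOf_eq]; linarith))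
  have hdiF := my_sign_dichotomy (my_face_preconnected hF) hcont hneF
  have hdiF' := my_sign_dichotomy (my_face_preconnected hF') hcont hneF'
  have key : ¬ (Above F l₀ ↔ Above F' l₀) := by
    intro hiff
    apply hne
    rcases hdiF with hFpos | hFneg
    · have hAF : Above F l₀ := by
        rw [my_above_iff hl₀]; intro r hr; have := hFpos r hr; linarith
      have hAF' := hiff.mp hAF
      rw [my_above_iff hl₀] at hAF'
      apply my_faces_eq hF hF' hconvP hsubP
      · refine ⟨q, hqF, hqball, ?_⟩
        have := hFpos q hqF; simp only [mem_setOf_eq] at this ⊢; linarith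
      · refine ⟨q', hq'F', hq'ball, ?_⟩
        have := hAF' q' hq'F'; simp only [mem_setOf_eq]; linarith
    · have hnAF : ¬ Above F l₀ := by
        intro h
        rw [my_above_iff hl₀] at h
        have h1 := h q hqF
        have h2 := hFneg q hqF
        linarith
      have hF'neg : ∀ r ∈ F', (fun r : Pt => r.2 - (a₀ * r.1 + b₀)) r < 0 := by
        rcases hdiF' with hpos' | hneg'
        · exfalso
          apply hnAF
          apply hiff.mpr
          rw [my_above_iff hl₀]
          intro r hr; have := hpos' r hr; linarith
        · exact hneg'
      apply my_faces_eq hF hF' hconvN hsubN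
      · refine ⟨q, hqF, hqball, ?_⟩
        have := hFneg q hqF; simp only [mem_setOf_eq] at this ⊢; linarith
      · refine ⟨q', hq'F', hq'ball, ?_⟩
        have := hF'neg q' hq'F'; simp only [mem_setOf_eq] at this ⊢; linarith
  -- Counting
  have hfinS : {l : Set Pt | l ∈ L ∧ Above F l}.Finite :=
    L.finite_toSet.subset (fun l hl => hl.1)
  have hfinS' : {l : Set Pt | l ∈ L ∧ Above F' l}.Finite :=
    L.finite_toSet.subset (fun l hl => hl.1)
  have hdiffeq : {l : Set Pt | l ∈ L ∧ Above F l} \ {l₀}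
      = {l : Set Pt | l ∈ L ∧ Above F' l} \ {l₀} := by
    ext l
    simp only [mem_diff, mem_setOf_eq, mem_singleton_iff]
    constructor
    · rintro ⟨⟨h1, h2⟩, h3⟩; exact ⟨⟨h1, (stepA l h1 h3).mp h2⟩, h3⟩
    · rintro ⟨⟨h1, h2⟩, h3⟩; exact ⟨⟨h1, (stepA l h1 h3).mpr h2⟩, h3⟩
  unfold faceLevel
  by_cases hcase : Above F l₀
  · have hnc : ¬ Above F' l₀ := fun h => key ⟨fun _ => h, fun _ => hcase⟩
    have heq : {l : Set Pt | l ∈ L ∧ Above F l}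
        = insert l₀ {l : Set Pt | l ∈ L ∧ Above F' l} := by
      ext l
      simp only [mem_setOf_eq, mem_insert_iff]
      constructor
      · rintro ⟨h1, h2⟩
        by_cases h3 : l = l₀
        · exact Or.inl h3
        · have : l ∈ {l : Set Pt | l ∈ L ∧ Above F' l} \ {l₀} := by
            rw [← hdiffeq]; exact ⟨⟨h1, h2⟩, h3⟩
          exact Or.inr this.1
      · rintro (rfl | ⟨h1, h2⟩)
        · exact ⟨hl₀L, hcase⟩
        · by_cases h3 : l = l₀
          · subst h3; exact absurd h2 hnc
          · have : l ∈ {l : Set Pt | l ∈ L ∧ Above F l} \ {l₀} := by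
              rw [hdiffeq]; exact ⟨⟨h1, h2⟩, h3⟩
            exact this.1
    have hnotmem : l₀ ∉ {l : Set Pt | l ∈ L ∧ Above F' l} := fun h => hnc h.2
    rw [heq, Set.ncard_insert_of_notMem hnotmem hfinS']
    push_cast
    ring_nf
    simp
  · have hc' : Above F' l₀ := by
      by_contra hnc'
      exact key ⟨fun h => absurd h hcase, fun h => absurd h hnc'⟩
    have heq : {l : Set Pt | l ∈ L ∧ Above F' l}
        = insert l₀ {l : Set Pt | l ∈ L ∧ Above F l} := by
      ext l
      simp only [mem_setOf_eq, mem_insert_iff]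
      constructor
      · rintro ⟨h1, h2⟩
        by_cases h3 : l = l₀
        · exact Or.inl h3
        · have : l ∈ {l : Set Pt | l ∈ L ∧ Above F l} \ {l₀} := by
            rw [hdiffeq]; exact ⟨⟨h1, h2⟩, h3⟩
          exact Or.inr this.1
      · rintro (rfl | ⟨h1, h2⟩)
        · exact ⟨hl₀L, hc'⟩
        · by_cases h3 : l = l₀
          · subst h3; exact absurd h2 hcase
          · have : l ∈ {l : Set Pt | l ∈ L ∧ Above F' l} \ {l₀} := by
              rw [← hdiffeq]; exact ⟨⟨h1, h2⟩, h3⟩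
            exact this.1
    have hnotmem : l₀ ∉ {l : Set Pt | l ∈ L ∧ Above F l} := fun h => hcase h.2
    rw [heq, Set.ncard_insert_of_notMem hnotmem hfinS]
    push_cast
    ring_nf
    simp
end

section
/- Let L be a simple arrangement of n non-vertical lines in ℝ². Suppose F is an unbounded face of level i containing points of arbitrarily negative x-coordinate (a left-unbounded face), and F' is an unbounded face of level j containing points of arbitrarily large x-coordinate (a right-unbounded face). If i ≤ n/2 and j ≤ n/2, then every dual path from F to F' has length at least i + j + 1; if i ≥ n/2 and j ≥ n/2, then every dual path from F to F' has length at least 2n − i − j + 1. -/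
open Set

open scoped Classical

noncomputable def aboveSet (L : Finset (Set Pt)) (F : Set Pt) : Finset (Set Pt) :=
  L.filter fun l => Above F l

lemma faceLevel_eq_s17 (L : Finset (Set Pt)) (F : Set Pt) :
    faceLevel L F = (aboveSet L F).card := by
  rw [faceLevel, ← Set.ncard_coe_finset]
  congr 1
  ext l
  simp [aboveSet]

lemma graph_rep_unique {a b a' b' : ℝ}
    (h : {q : Pt | q.2 = a*q.1+b} = {q : Pt | q.2 = a'*q.1+b'}) : a = a' ∧ b = b' := by
  have h0 : ((0:ℝ), b) ∈ {q : Pt | q.2 = a*q.1+b} := by simp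
  have h1 : ((1:ℝ), a+b) ∈ {q : Pt | q.2 = a*q.1+b} := by simp
  rw [h] at h0 h1
  simp only [Set.mem_setOf_eq] at h0 h1
  norm_num at h0 h1
  constructor <;> linarith

lemma IsFace.nonempty {L : Finset (Set Pt)} {F : Set Pt} (h : IsFace L F) : F.Nonempty := by
  obtain ⟨p, hp, rfl⟩ := h
  exact ⟨p, mem_connectedComponentIn hp⟩

lemma IsFace.preconnected {L : Finset (Set Pt)} {F : Set Pt} (h : IsFace L F) :
    IsPreconnected F := by
  obtain ⟨p, hp, rfl⟩ := h
  exact isPreconnected_connectedComponentIn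

lemma IsFace.subset_compl {L : Finset (Set Pt)} {F : Set Pt} (h : IsFace L F) :
    F ⊆ (⋃ l ∈ L, l)ᶜ := by
  obtain ⟨p, hp, rfl⟩ := h
  exact connectedComponentIn_subset _ _

lemma face_side {L : Finset (Set Pt)} {F : Set Pt} (hF : IsFace L F) {l : Set Pt}
    (hl : l ∈ L) {a b : ℝ} (hrep : l = {q : Pt | q.2 = a*q.1+b}) :
    (∀ q ∈ F, a*q.1+b < q.2) ∨ (∀ q ∈ F, q.2 < a*q.1+b) := by
  have hdisj : ∀ q ∈ F, q ∉ l := by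
    intro q hq hql
    exact hF.subset_compl hq (Set.mem_biUnion hl hql)
  by_contra hc
  push_neg at hc
  obtain ⟨⟨q1, hq1F, hq1⟩, ⟨q2, hq2F, hq2⟩⟩ := hc
  have hcont : ContinuousOn (fun q : Pt => q.2 - (a*q.1+b)) F := by fun_prop
  obtain ⟨x, hxF, hx⟩ := hF.preconnected.intermediate_value₂ hq1F hq2F hcont
    (continuousOn_const (c := (0:ℝ))) (by simpa using hq1) (by simpa using hq2)
  have : x ∈ l := by rw [hrep]; simpa [sub_eq_zero] using hx
  exact hdisj x hxF this

lemma above_iff_s17 {F l : Set Pt} {a b : ℝ} (hrep : l = {q : Pt | q.2 = a*q.1+b}) :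
    Above F l ↔ ∀ q ∈ F, a*q.1+b < q.2 := by
  constructor
  · rintro ⟨a', b', hrep', hab⟩
    obtain ⟨ha, hb⟩ := graph_rep_unique (hrep ▸ hrep' : _ = _)
    subst ha; subst hb
    exact hab
  · intro h; exact ⟨a, b, hrep, h⟩

lemma closure_above {F : Set Pt} {a b : ℝ} (h : ∀ q ∈ F, a*q.1+b < q.2) :
    ∀ q ∈ closure F, a*q.1+b ≤ q.2 := by
  have hcl : IsClosed {q : Pt | a*q.1+b ≤ q.2} :=
    isClosed_le (by fun_prop) (by fun_prop)
  exact fun q hq => closure_minimal (fun q hq => le_of_lt (h q hq)) hcl hq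

lemma closure_below {F : Set Pt} {a b : ℝ} (h : ∀ q ∈ F, q.2 < a*q.1+b) :
    ∀ q ∈ closure F, q.2 ≤ a*q.1+b := by
  have hcl : IsClosed {q : Pt | q.2 ≤ a*q.1+b} :=
    isClosed_le (by fun_prop) (by fun_prop)
  exact fun q hq => closure_minimal (fun q hq => le_of_lt (h q hq)) hcl hq

lemma adjacent_above {L : Finset (Set Pt)} {G G' : Set Pt}
    (hnv : ∀ l ∈ L, NonVertical l)
    (hG : IsFace L G) (hG' : IsFace L G') (hadj : Adjacent L G G') :
    ∃ l0, ∀ m ∈ L, m ≠ l0 → (Above G m ↔ Above G' m) := by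
  obtain ⟨hne, p, hp, l0, ⟨hl0L, hpl0⟩, huniq⟩ := hadj
  refine ⟨l0, fun m hm hml0 => ?_⟩
  have hpm : p ∉ m := fun hpm => hml0 (huniq m ⟨hm, hpm⟩)
  obtain ⟨a, b, hrep⟩ := hnv m hm
  have key : ∀ (H : Set Pt), IsFace L H → p ∈ closure H → (Above H m ↔ a*p.1+b < p.2) := by
    intro H hH hpH
    rw [above_iff_s17 hrep]
    constructor
    · intro h
      rcases lt_or_eq_of_le (closure_above h p hpH) with h' | h'
      · exact h'
      · exact absurd (by rw [hrep]; exact h'.symm) hpm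
    · intro hpab
      rcases face_side hH hm hrep with h | h
      · exact h
      · exact absurd (closure_below h p hpH) (by linarith)
  rw [key G hG hp.1, key G' hG' hp.2]

lemma adjacent_symmDiff_card {L : Finset (Set Pt)} {G G' : Set Pt}
    (hnv : ∀ l ∈ L, NonVertical l)
    (hG : IsFace L G) (hG' : IsFace L G') (hadj : Adjacent L G G') :
    (symmDiff (aboveSet L G) (aboveSet L G')).card ≤ 1 := by
  obtain ⟨l0, h⟩ := adjacent_above hnv hG hG' hadj
  have hsub : symmDiff (aboveSet L G) (aboveSet L G') ⊆ {l0} := by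
    intro x hx
    rw [Finset.mem_symmDiff] at hx
    simp only [aboveSet, Finset.mem_filter, not_and] at hx
    rw [Finset.mem_singleton]
    by_contra hxl0
    rcases hx with ⟨⟨hxL, hAb⟩, hnot⟩ | ⟨⟨hxL, hAb⟩, hnot⟩
    · exact hnot hxL ((h x hxL hxl0).mp hAb)
    · exact hnot hxL ((h x hxL hxl0).mpr hAb)
  exact (Finset.card_le_card hsub).trans (by simp)

lemma path_bound {L : Finset (Set Pt)} (hnv : ∀ l ∈ L, NonVertical l) :
    ∀ P : List (Set Pt), (∀ G ∈ P, IsFace L G) → P.Chain' (Adjacent L) →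
    ∀ F F', P.head? = some F → P.getLast? = some F' →
    (symmDiff (aboveSet L F) (aboveSet L F')).card < P.length := by
  intro P
  induction P with
  | nil => intro _ _ F F' h _; simp at h
  | cons G rest ih =>
    intro hfaces hchain F F' hhead hlast
    have hFG : G = F := by simpa using hhead
    cases rest with
    | nil =>
      have hFF' : G = F' := by simpa using hlast
      rw [← hFG, ← hFF']
      simp [symmDiff_self]
    | cons G2 rest2 =>
      have hadj : Adjacent L G G2 := (List.isChain_cons_cons.mp hchain).1
      have hchain2 : (G2::rest2).Chain' (Adjacent L) := (List.isChain_cons_cons.mp hchain).2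
      have hlast2 : (G2::rest2).getLast? = some F' := by
        rw [← hlast, List.getLast?_cons_cons]
      have ih' := ih (fun H hH => hfaces H (List.mem_cons_of_mem _ hH)) hchain2 G2 F'
        rfl hlast2
      have h1 := adjacent_symmDiff_card hnv (hfaces G (by simp)) (hfaces G2 (by simp)) hadj
      rw [← hFG]
      have htri := symmDiff_triangle (aboveSet L G) (aboveSet L G2) (aboveSet L F')
      have h2 := (Finset.card_le_card htri).trans (Finset.card_union_le _ _)
      simp only [List.length_cons] at *
      omega

lemma slope_strict {L : Finset (Set Pt)} {F : Set Pt} (hL : SimpleArrangement L)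
    (hF : IsFace L F) {l m : Set Pt} (hl : l ∈ L) (hm : m ∈ L) {a b c d : ℝ}
    (hla : l = {q : Pt | q.2 = a*q.1+b}) (hmc : m = {q : Pt | q.2 = c*q.1+d})
    (hab : ∀ q ∈ F, a*q.1+b < q.2) (hcd : ∀ q ∈ F, q.2 < c*q.1+d) : a ≠ c := by
  intro hac
  obtain ⟨q, hqF⟩ := hF.nonempty
  have h1 := hab q hqF
  have h2 := hcd q hqF
  have hbd : b < d := by rw [hac] at h1; linarith
  have hlm : l ≠ m := by
    intro h
    rw [hla, hmc] at h
    obtain ⟨_, hb⟩ := graph_rep_unique h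
    linarith
  obtain ⟨p, ⟨hpl, hpm⟩, _⟩ := hL.2.1 l hl m hm hlm
  rw [hla] at hpl; rw [hmc] at hpm
  simp only [Set.mem_setOf_eq] at hpl hpm
  rw [hac] at hpl
  linarith

lemma slope_left {L : Finset (Set Pt)} {F : Set Pt} (hL : SimpleArrangement L)
    (hF : IsFace L F) (hFunb : ∀ M : ℝ, ∃ p ∈ F, p.1 < M)
    {l m : Set Pt} (hl : l ∈ L) (hm : m ∈ L) {a b c d : ℝ}
    (hla : l = {q : Pt | q.2 = a*q.1+b}) (hmc : m = {q : Pt | q.2 = c*q.1+d})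
    (hab : ∀ q ∈ F, a*q.1+b < q.2) (hcd : ∀ q ∈ F, q.2 < c*q.1+d) : c < a := by
  have hle : c ≤ a := by
    by_contra h
    push_neg at h
    obtain ⟨q, hqF, hq⟩ := hFunb ((d - b)/(a - c))
    have h1 : a*q.1+b < c*q.1+d := lt_trans (hab q hqF) (hcd q hqF)
    have hac : a - c < 0 := by linarith
    have h2 : d - b < q.1 * (a - c) := (lt_div_iff_of_neg hac).mp hq
    nlinarith
  exact lt_of_le_of_ne hle (Ne.symm (slope_strict hL hF hl hm hla hmc hab hcd))

lemma slope_right {L : Finset (Set Pt)} {F : Set Pt} (hL : SimpleArrangement L)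
    (hF : IsFace L F) (hFunb : ∀ M : ℝ, ∃ p ∈ F, M < p.1)
    {l m : Set Pt} (hl : l ∈ L) (hm : m ∈ L) {a b c d : ℝ}
    (hla : l = {q : Pt | q.2 = a*q.1+b}) (hmc : m = {q : Pt | q.2 = c*q.1+d})
    (hab : ∀ q ∈ F, a*q.1+b < q.2) (hcd : ∀ q ∈ F, q.2 < c*q.1+d) : a < c := by
  have hle : a ≤ c := by
    by_contra h
    push_neg at h
    obtain ⟨q, hqF, hq⟩ := hFunb ((d - b)/(a - c))
    have h1 : a*q.1+b < c*q.1+d := lt_trans (hab q hqF) (hcd q hqF)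
    have hac : 0 < a - c := by linarith
    have h2 : d - b < (a - c) * q.1 := (div_lt_iff₀' hac).mp hq
    nlinarith
  exact lt_of_le_of_ne hle (slope_strict hL hF hl hm hla hmc hab hcd)

lemma below_of_not_above {L : Finset (Set Pt)} {F : Set Pt} (hF : IsFace L F)
    {m : Set Pt} (hm : m ∈ L) {c d : ℝ} (hmc : m = {q : Pt | q.2 = c*q.1+d})
    (h : ¬ Above F m) : ∀ q ∈ F, q.2 < c*q.1+d := by
  rcases face_side hF hm hmc with h' | h'
  · exact absurd ((above_iff_s17 hmc).mpr h') h
  · exact h'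

lemma disjoint_aboveSets {L : Finset (Set Pt)} {F F' : Set Pt} (hL : SimpleArrangement L)
    (hnv : ∀ l ∈ L, NonVertical l) (hF : IsFace L F) (hF' : IsFace L F')
    (hFunb : ∀ M : ℝ, ∃ p ∈ F, p.1 < M) (hF'unb : ∀ M : ℝ, ∃ p ∈ F', M < p.1)
    (hn : (aboveSet L F).card + (aboveSet L F').card ≤ L.card) :
    Disjoint (aboveSet L F) (aboveSet L F') := by
  rw [Finset.disjoint_left]
  intro l hlF hlF'
  simp only [aboveSet, Finset.mem_filter] at hlF hlF'
  obtain ⟨hlL, hAF⟩ := hlF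
  obtain ⟨_, hAF'⟩ := hlF'
  obtain ⟨a, b, hla⟩ := hnv l hlL
  have habF := (above_iff_s17 hla).mp hAF
  have habF' := (above_iff_s17 hla).mp hAF'
  have hsub : L ⊆ aboveSet L F ∪ aboveSet L F' := by
    intro m hmL
    by_contra hmem
    simp only [Finset.mem_union, aboveSet, Finset.mem_filter, not_or, not_and] at hmem
    obtain ⟨c, d, hmc⟩ := hnv m hmL
    have hbF := below_of_not_above hF hmL hmc (hmem.1 hmL)
    have hbF' := below_of_not_above hF' hmL hmc (hmem.2 hmL)
    have h1 := slope_left hL hF hFunb hlL hmL hla hmc habF hbF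
    have h2 := slope_right hL hF' hF'unb hlL hmL hla hmc habF' hbF'
    linarith
  have hcup := Finset.card_le_card hsub
  have hiu := Finset.card_inter_add_card_union (aboveSet L F) (aboveSet L F')
  have hpos : 0 < (aboveSet L F ∩ aboveSet L F').card := by
    refine Finset.card_pos.mpr ⟨l, Finset.mem_inter.mpr ⟨?_, ?_⟩⟩ <;>
      simp only [aboveSet, Finset.mem_filter] <;> exact ⟨hlL, by assumption⟩
  omega

lemma union_aboveSets {L : Finset (Set Pt)} {F F' : Set Pt} (hL : SimpleArrangement L)
    (hnv : ∀ l ∈ L, NonVertical l) (hF : IsFace L F) (hF' : IsFace L F')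
    (hFunb : ∀ M : ℝ, ∃ p ∈ F, p.1 < M) (hF'unb : ∀ M : ℝ, ∃ p ∈ F', M < p.1)
    (hn : L.card ≤ (aboveSet L F).card + (aboveSet L F').card) :
    aboveSet L F ∪ aboveSet L F' = L := by
  have hsub : aboveSet L F ∪ aboveSet L F' ⊆ L := by
    intro x hx
    rcases Finset.mem_union.mp hx with h | h <;>
      exact (Finset.mem_filter.mp h).1
  by_contra hne
  obtain ⟨m, hmL, hmnot⟩ := Finset.exists_of_ssubset (hsub.ssubset_of_ne hne)
  simp only [Finset.mem_union, aboveSet, Finset.mem_filter, not_or, not_and] at hmnot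
  obtain ⟨c, d, hmc⟩ := hnv m hmL
  have hbF := below_of_not_above hF hmL hmc (hmnot.1 hmL)
  have hbF' := below_of_not_above hF' hmL hmc (hmnot.2 hmL)
  have hdisj : Disjoint (aboveSet L F) (aboveSet L F') := by
    rw [Finset.disjoint_left]
    intro l hlF hlF'
    simp only [aboveSet, Finset.mem_filter] at hlF hlF'
    obtain ⟨hlL, hAF⟩ := hlF
    obtain ⟨_, hAF'⟩ := hlF'
    obtain ⟨a, b, hla⟩ := hnv l hlL
    have h1 := slope_left hL hF hFunb hlL hmL hla hmc ((above_iff_s17 hla).mp hAF) hbF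
    have h2 := slope_right hL hF' hF'unb hlL hmL hla hmc ((above_iff_s17 hla).mp hAF') hbF'
    linarith
  have hcard := Finset.card_union_of_disjoint hdisj
  have hsub2 : aboveSet L F ∪ aboveSet L F' ⊆ L.erase m := by
    intro x hx
    refine Finset.mem_erase.mpr ⟨?_, hsub hx⟩
    rintro rfl
    rcases Finset.mem_union.mp hx with h | h <;>
      simp only [aboveSet, Finset.mem_filter] at h
    · exact absurd ((above_iff_s17 hmc).mp h.2) (fun hh => absurd hh (by
        intro _; exact absurd ((above_iff_s17 hmc).mp h.2 _ (hF.nonempty.choose_spec)) (by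
          have := hbF _ hF.nonempty.choose_spec; linarith)))
    · exact absurd ((above_iff_s17 hmc).mp h.2) (fun hh => absurd hh (by
        intro _; exact absurd ((above_iff_s17 hmc).mp h.2 _ (hF'.nonempty.choose_spec)) (by
          have := hbF' _ hF'.nonempty.choose_spec; linarith)))
  have := Finset.card_le_card hsub2
  rw [Finset.card_erase_of_mem hmL] at this
  have hmpos : 0 < L.card := Finset.card_pos.mpr ⟨m, hmL⟩
  omega


/-- Lower bounds on the length of a dual path from a left-unbounded face of level `i` to a
right-unbounded face of level `j`: if `i, j ≤ n/2` the length is at least `i + j + 1`, and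
if `i, j ≥ n/2` it is at least `2n − i − j + 1`. -/
theorem statement17 (n : ℕ) (L : Finset (Set Pt))
    (hL : SimpleArrangement L) (hcard : L.card = n)
    (hnv : ∀ l ∈ L, NonVertical l)
    (F F' : Set Pt) (hF : IsFace L F) (hF' : IsFace L F')
    (hFunb : ∀ M : ℝ, ∃ p ∈ F, p.1 < M)
    (hF'unb : ∀ M : ℝ, ∃ p ∈ F', M < p.1)
    (i j : ℕ) (hi : i = faceLevel L F) (hj : j = faceLevel L F') :
    (((i : ℝ) ≤ n / 2 ∧ (j : ℝ) ≤ n / 2) →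
      ∀ P : List (Set Pt), IsDualPath L P →
        P.head? = some F → P.getLast? = some F' →
        (i : ℝ) + j + 1 ≤ P.length) ∧
    (((n : ℝ) / 2 ≤ i ∧ (n : ℝ) / 2 ≤ j) →
      ∀ P : List (Set Pt), IsDualPath L P →
        P.head? = some F → P.getLast? = some F' →
        2 * (n : ℝ) - i - j + 1 ≤ P.length) := by
  have hi' : i = (aboveSet L F).card := by rw [hi, faceLevel_eq_s17]
  have hj' : j = (aboveSet L F').card := by rw [hj, faceLevel_eq_s17]
  constructor
  · rintro ⟨h1, h2⟩ P ⟨hfaces, -, hchain⟩ hhead hlast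
    have hijn : i + j ≤ n := by
      have h : (i:ℝ) + j ≤ n := by linarith
      exact_mod_cast h
    have hdis := disjoint_aboveSets hL hnv hF hF' hFunb hF'unb
      (by rw [hcard, ← hi', ← hj']; omega)
    have hpb := path_bound hnv P hfaces hchain F F' hhead hlast
    have hΔ : (symmDiff (aboveSet L F) (aboveSet L F')).card = i + j := by
      rw [hdis.symmDiff_eq_sup]
      rw [show (aboveSet L F ⊔ aboveSet L F') = aboveSet L F ∪ aboveSet L F' from rfl]
      rw [Finset.card_union_of_disjoint hdis, ← hi', ← hj']
    rw [hΔ] at hpb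
    have hfin : (i + j + 1 : ℕ) ≤ P.length := hpb
    exact_mod_cast Nat.cast_le.mpr hfin
  · rintro ⟨h1, h2⟩ P ⟨hfaces, -, hchain⟩ hhead hlast
    have hijn : n ≤ i + j := by
      have h : (n:ℝ) ≤ i + j := by linarith
      exact_mod_cast h
    have huni := union_aboveSets hL hnv hF hF' hFunb hF'unb
      (by rw [hcard, ← hi', ← hj']; omega)
    have hiu := Finset.card_inter_add_card_union (aboveSet L F) (aboveSet L F')
    rw [huni, hcard, ← hi', ← hj'] at hiu
    have hΔ : (symmDiff (aboveSet L F) (aboveSet L F')).card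
        + (aboveSet L F ∩ aboveSet L F').card = n := by
      rw [symmDiff_eq_sup_sdiff_inf]
      rw [show (aboveSet L F ⊔ aboveSet L F') = aboveSet L F ∪ aboveSet L F' from rfl,
        show (aboveSet L F ⊓ aboveSet L F') = aboveSet L F ∩ aboveSet L F' from rfl]
      rw [Finset.card_sdiff_of_subset (Finset.inter_subset_union), huni, hcard]
      have hle : (aboveSet L F ∩ aboveSet L F').card ≤ n := by
        have h := Finset.card_le_card
          (Finset.inter_subset_union (s := aboveSet L F) (t := aboveSet L F'))
        rwa [huni, hcard] at h
      omega
    have hpb := path_bound hnv P hfaces hchain F F' hhead hlast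
    have hfin : ((symmDiff (aboveSet L F) (aboveSet L F')).card : ℝ) + 1 ≤ P.length := by
      exact_mod_cast Nat.cast_le.mpr hpb
    have e1 : ((aboveSet L F ∩ aboveSet L F').card : ℝ) = i + j - n := by
      have : ((aboveSet L F ∩ aboveSet L F').card : ℝ) + n = i + j := by exact_mod_cast hiu
      linarith
    have e2 : ((symmDiff (aboveSet L F) (aboveSet L F')).card : ℝ)
        + ((aboveSet L F ∩ aboveSet L F').card : ℝ) = n := by exact_mod_cast hΔ
    linarith
end
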